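/- arXiv:2605.06099 — 3 statements merged into one kernel-verified Lean document; each statement's English description precedes it below -/
import Mathlib

section
/- For 0 < α < 2, c > 0, m > 0 and u ≥ 0, the Bernstein function Ψ_c^α admits the integral representation Ψ_c^α(u) = (α(2c^β)^{α/2})/(2Γ(1−α/2)) ∫₀^∞ (1 − e^{−uy}) exp(−(m c^γ)^{2/α} y /(2 c^β)) y^{−1−α/2} dy, where 2α = βγ + γ². -/
open Real Set MeasureTheory

open Filter


lemma integrableOn_aux (s lam : ℝ) (hs0 : 0 < s) (hs1 : s < 1) (hl : 0 < lam) :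
    IntegrableOn (fun y : ℝ => (1 - Real.exp (-lam * y)) * y ^ (-1 - s)) (Ioi (0:ℝ)) := by
  have hmeas : AEStronglyMeasurable (fun y : ℝ => (1 - Real.exp (-lam * y)) * y ^ (-1 - s))
      (volume.restrict (Ioi (0:ℝ))) := by
    apply Measurable.aestronglyMeasurable
    fun_prop
  rw [← Ioc_union_Ioi_eq_Ioi (zero_le_one), integrableOn_union]
  constructor
  · have hint : IntegrableOn (fun y : ℝ => lam * y ^ (-s)) (Ioc (0:ℝ) 1) := by
      apply Integrable.const_mul
      exact (intervalIntegrable_iff_integrableOn_Ioc_of_le zero_le_one).mp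
        (intervalIntegral.intervalIntegrable_rpow' (by linarith))
    apply Integrable.mono' hint (hmeas.mono_set (Ioc_subset_Ioi_self))
    filter_upwards [ae_restrict_mem measurableSet_Ioc] with y hy
    have hy0 : 0 < y := hy.1
    have h1 : 0 ≤ 1 - Real.exp (-lam * y) := by
      have : Real.exp (-lam * y) ≤ 1 := by
        rw [Real.exp_le_one_iff]; nlinarith
      linarith
    have h2 : 1 - Real.exp (-lam * y) ≤ lam * y := by
      have := Real.add_one_le_exp (-lam * y)
      linarith
    have hp : (0:ℝ) ≤ y ^ (-1 - s) := (Real.rpow_pos_of_pos hy0 _).le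
    rw [Real.norm_eq_abs, abs_of_nonneg (mul_nonneg h1 hp)]
    calc (1 - Real.exp (-lam * y)) * y ^ (-1 - s) ≤ (lam * y) * y ^ (-1 - s) := by
          apply mul_le_mul_of_nonneg_right h2 hp
      _ = lam * y ^ (-s) := by
          rw [mul_assoc]
          congr 1
          rw [show (-s) = 1 + (-1 - s) by ring, Real.rpow_add hy0, Real.rpow_one]
  · have hint := integrableOn_Ioi_rpow_of_lt (show -1 - s < -1 by linarith) (zero_lt_one)
    apply Integrable.mono' hint (hmeas.mono_set (Ioi_subset_Ioi zero_le_one))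
    filter_upwards [ae_restrict_mem measurableSet_Ioi] with y hy
    have hy0 : (0:ℝ) < y := lt_trans zero_lt_one hy
    have h1 : 0 ≤ 1 - Real.exp (-lam * y) := by
      have : Real.exp (-lam * y) ≤ 1 := by
        rw [Real.exp_le_one_iff]; nlinarith
      linarith
    have h2 : 1 - Real.exp (-lam * y) ≤ 1 := by
      have := Real.exp_pos (-lam * y); linarith
    have hp : (0:ℝ) ≤ y ^ (-1 - s) := (Real.rpow_pos_of_pos hy0 _).le
    rw [Real.norm_eq_abs, abs_of_nonneg (mul_nonneg h1 hp)]
    nlinarith [mul_le_mul_of_nonneg_right h2 hp]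

lemma integrableOn_exp_rpow (s lam : ℝ) (hs1 : s < 1) (hl : 0 < lam) :
    IntegrableOn (fun y : ℝ => Real.exp (-lam * y) * y ^ (-s)) (Ioi (0:ℝ)) := by
  have := integrableOn_rpow_mul_exp_neg_mul_rpow (p := 1) (s := -s) (b := lam)
    (by linarith) zero_lt_one hl
  simpa [Real.rpow_one, mul_comm] using this

lemma key_integral (s lam : ℝ) (hs0 : 0 < s) (hs1 : s < 1) (hl : 0 < lam) :
    ∫ y in Ioi (0:ℝ), (1 - Real.exp (-lam * y)) * y ^ (-1 - s)
      = Real.Gamma (1 - s) * lam ^ s / s := by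
  have hs : s ≠ 0 := ne_of_gt hs0
  set u : ℝ → ℝ := fun y => 1 - Real.exp (-lam * y) with hu_def
  set v : ℝ → ℝ := fun y => -(y ^ (-s)) / s with hv_def
  set u' : ℝ → ℝ := fun y => lam * Real.exp (-lam * y) with hu'_def
  set v' : ℝ → ℝ := fun y => y ^ (-1 - s) with hv'_def
  have hu : ∀ y ∈ Ioi (0:ℝ), HasDerivAt u (u' y) y := by
    intro y _
    have h := (((hasDerivAt_id y).const_mul (-lam)).exp).const_sub 1
    refine h.congr_deriv ?_
    simp only [hu'_def, id_eq]
    ring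
  have hv : ∀ y ∈ Ioi (0:ℝ), HasDerivAt v (v' y) y := by
    intro y hy
    have h := (Real.hasDerivAt_rpow_const (p := -s) (Or.inl (ne_of_gt hy))).neg.div_const s
    refine h.congr_deriv ?_
    simp only [hv'_def]
    rw [show (-1 - s) = (-s - 1) by ring]
    field_simp
  have huv' : IntegrableOn (u * v') (Ioi (0:ℝ)) := integrableOn_aux s lam hs0 hs1 hl
  have hu'v : IntegrableOn (u' * v) (Ioi (0:ℝ)) := by
    have h := (integrableOn_exp_rpow s lam hs1 hl).const_mul (-(lam / s))
    apply IntegrableOn.congr_fun h _ measurableSet_Ioi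
    intro y _
    simp only [hu'_def, hv_def, Pi.mul_apply]
    ring
  have h_zero : Tendsto (u * v) (nhdsWithin 0 (Ioi 0)) (nhds (0:ℝ)) := by
    refine squeeze_zero_norm' (a := fun y => (lam / s) * y ^ (1 - s)) ?_ ?_
    · filter_upwards [self_mem_nhdsWithin] with y (hy : (0:ℝ) < y)
      have h1 : 0 ≤ 1 - Real.exp (-lam * y) := by
        have : Real.exp (-lam * y) ≤ 1 := by rw [Real.exp_le_one_iff]; nlinarith
        linarith
      have h2 : 1 - Real.exp (-lam * y) ≤ lam * y := by
        have := Real.add_one_le_exp (-lam * y); linarith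
      have hp : (0:ℝ) < y ^ (-s) := Real.rpow_pos_of_pos hy _
      have hnorm : ‖(u * v) y‖ = (1 - Real.exp (-lam * y)) * (y ^ (-s) / s) := by
        simp only [hu_def, hv_def, Pi.mul_apply, Real.norm_eq_abs, abs_mul, abs_div, abs_neg]
        rw [abs_of_nonneg h1, abs_of_nonneg hp.le, abs_of_nonneg hs0.le]
      rw [hnorm]
      have hyy : y * y ^ (-s) = y ^ (1 - s) := by
        rw [show (1 - s : ℝ) = 1 + (-s) by ring, Real.rpow_add hy, Real.rpow_one]
      calc (1 - Real.exp (-lam * y)) * (y ^ (-s) / s)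
          ≤ (lam * y) * (y ^ (-s) / s) :=
            mul_le_mul_of_nonneg_right h2 (by positivity)
        _ = (lam / s) * (y * y ^ (-s)) := by ring
        _ = (lam / s) * y ^ (1 - s) := by rw [hyy]
    · have hcont : ContinuousAt (fun y : ℝ => y ^ (1 - s)) 0 :=
        Real.continuousAt_rpow_const 0 (1 - s) (Or.inr (by linarith))
      have hg : Tendsto (fun y : ℝ => (lam / s) * y ^ (1 - s)) (nhdsWithin 0 (Ioi 0))
          (nhds ((lam / s) * (0:ℝ) ^ (1 - s))) :=
        (hcont.tendsto.mono_left nhdsWithin_le_nhds).const_mul _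
      rw [Real.zero_rpow (show (1:ℝ) - s ≠ 0 from ne_of_gt (by linarith)), mul_zero] at hg
      exact hg
  have h_infty : Tendsto (u * v) atTop (nhds (0:ℝ)) := by
    have h0 : Tendsto (fun y : ℝ => Real.exp (-lam * y)) atTop (nhds 0) := by
      simp only [neg_mul]
      exact Real.tendsto_exp_atBot.comp (tendsto_neg_atTop_atBot.comp (tendsto_id.const_mul_atTop hl))
    have h1 : Tendsto u atTop (nhds 1) := by
      simpa only [sub_zero] using h0.const_sub 1
    have h2 : Tendsto v atTop (nhds 0) := by
      simpa only [neg_zero, zero_div] using (tendsto_rpow_neg_atTop hs0).neg.div_const s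
    exact (by simpa only [one_mul] using h1.mul h2 : Tendsto (fun x => u x * v x) atTop (nhds 0))
  have hibp := integral_Ioi_mul_deriv_eq_deriv_mul hu hv huv' hu'v h_zero h_infty
  have hshow : (∫ y in Ioi (0:ℝ), (1 - Real.exp (-lam * y)) * y ^ (-1 - s))
      = ∫ y in Ioi (0:ℝ), u y * v' y := rfl
  rw [hshow, hibp]
  have hval : (∫ y in Ioi (0:ℝ), u' y * v y)
      = -(lam / s) * ((1 / lam) ^ (1 - s) * Real.Gamma (1 - s)) := by
    have heq : ∀ y : ℝ, u' y * v y
        = (-(lam / s)) * (y ^ ((1 - s) - 1) * Real.exp (-(lam * y))) := by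
      intro y
      simp only [hu'_def, hv_def, neg_mul]
      rw [show (1 - s) - 1 = -s by ring]
      ring
    simp only [heq]
    rw [integral_const_mul, integral_rpow_mul_exp_neg_mul_Ioi (by linarith) hl]
  rw [hval]
  have h1 : (1 / lam) ^ ((1:ℝ) - s) = lam ^ (s - 1) := by
    rw [one_div, Real.inv_rpow hl.le, ← Real.rpow_neg hl.le, neg_sub]
  have h2 : lam * lam ^ (s - 1) = lam ^ s := by
    conv_rhs => rw [show s = 1 + (s - 1) by ring]
    rw [Real.rpow_add hl, Real.rpow_one]
  rw [h1, ← h2]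
  field_simp
  ring

lemma shifted_integral (s b u : ℝ) (hs0 : 0 < s) (hs1 : s < 1) (hb : 0 < b) (hu : 0 ≤ u) :
    ∫ y in Ioi (0:ℝ), (1 - Real.exp (-u * y)) * Real.exp (-b * y) * y ^ (-1 - s)
      = Real.Gamma (1 - s) / s * ((u + b) ^ s - b ^ s) := by
  have hub : 0 < u + b := by linarith
  have hptw : ∀ y : ℝ, (1 - Real.exp (-u * y)) * Real.exp (-b * y) * y ^ (-1 - s)
      = (1 - Real.exp (-(u + b) * y)) * y ^ (-1 - s)
        - (1 - Real.exp (-b * y)) * y ^ (-1 - s) := by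
    intro y
    have he : Real.exp (-(u + b) * y) = Real.exp (-u * y) * Real.exp (-b * y) := by
      rw [← Real.exp_add]; ring_nf
    rw [he]; ring
  simp only [hptw]
  rw [integral_sub (integrableOn_aux s (u + b) hs0 hs1 hub) (integrableOn_aux s b hs0 hs1 hb),
    key_integral s (u + b) hs0 hs1 hub, key_integral s b hs0 hs1 hb]
  ring

/-- Integral (Lévy–Khintchine) representation of the generalized relativistic
Bernstein function: for `0 < α < 2`, `c > 0`, `m > 0` and `u ≥ 0`,
`Ψ_c^α(u) = (α (2c^β)^{α/2})/(2 Γ(1−α/2)) ∫₀^∞ (1 − e^{−uy})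
  e^{−(m c^γ)^{2/α} y /(2 c^β)} y^{−1−α/2} dy`, where `2α = βγ + γ²`. -/
theorem bernstein_integral_representation
    (α β γ m c : ℝ) (hα0 : 0 < α) (hα2 : α < 2) (hβ : 0 < β) (hγ : 0 < γ)
    (hm : 0 < m) (hc : 0 < c) (hcon : 2 * α = β * γ + γ ^ 2)
    (u : ℝ) (hu : 0 ≤ u) :
    (2 * c ^ β * u + (m * c ^ γ) ^ (2 / α)) ^ (α / 2) - m * c ^ γ
      = α * (2 * c ^ β) ^ (α / 2) / (2 * Real.Gamma (1 - α / 2)) *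
        ∫ y in Ioi (0 : ℝ),
          (1 - Real.exp (-u * y)) *
            Real.exp (-((m * c ^ γ) ^ (2 / α) * y) / (2 * c ^ β)) * y ^ (-1 - α / 2) := by
  have hs0 : 0 < α / 2 := by linarith
  have hs1 : α / 2 < 1 := by linarith
  set s := α / 2 with hs_def
  set k : ℝ := 2 * c ^ β with hk_def
  have hk : 0 < k := by positivity
  set a : ℝ := (m * c ^ γ) ^ (2 / α) with ha_def
  have hmc : 0 < m * c ^ γ := by positivity
  have ha : 0 < a := Real.rpow_pos_of_pos hmc _
  set b : ℝ := a / k with hb_def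
  have hb : 0 < b := by positivity
  have hexp : ∀ y : ℝ, -(a * y) / k = -b * y := by
    intro y; rw [hb_def]; field_simp
  simp only [hexp]
  rw [shifted_integral s b u hs0 hs1 hb hu]
  have hΓ : Real.Gamma (1 - s) ≠ 0 := ne_of_gt (Real.Gamma_pos_of_pos (by linarith))
  have hgen : ∀ G S K X : ℝ, G ≠ 0 → S ≠ 0 →
      (2 * S) * K / (2 * G) * (G / S * X) = K * X := by
    intro G S K X hG hS
    field_simp
  have hcoef : α * k ^ s / (2 * Real.Gamma (1 - s)) * (Real.Gamma (1 - s) / s * ((u + b) ^ s - b ^ s))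
      = k ^ s * ((u + b) ^ s - b ^ s) := by
    rw [show α = 2 * s by rw [hs_def]; ring]
    exact hgen _ _ _ _ hΓ hs0.ne'
  rw [hcoef]
  have hkb : k * b = a := by rw [hb_def]; field_simp
  have h1 : k ^ s * (u + b) ^ s = (k * u + a) ^ s := by
    rw [← Real.mul_rpow hk.le (by linarith), mul_add, hkb]
  have h2 : k ^ s * b ^ s = m * c ^ γ := by
    rw [← Real.mul_rpow hk.le hb.le, hkb, ha_def, ← Real.rpow_mul hmc.le,
      show 2 / α * s = 1 by rw [hs_def]; field_simp, Real.rpow_one]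
  rw [mul_sub, h1, h2]
end

section
/- Let (T_t^c)_{t≥0} be the subordinator with Laplace exponent Ψ_c^α, i.e., E[e^{−u T_t^c}] = e^{−tΨ_c^α(u)} for u ≥ 0. Then for 0 < u < (m c^γ)^{2/α}/(2c^β), the exponential moment E[e^{u T_t^c}] is finite and equals exp(−t((−2c^β u + (m c^γ)^{2/α})^{α/2} − m c^γ)). -/
open Real Set MeasureTheory
open scoped Nat

private lemma pow_mul_exp_neg_le (n : ℕ) {s x : ℝ} (hs : 0 < s) (hx : 0 ≤ x) :
    x ^ n * Real.exp (-(s * x)) ≤ (n ! : ℝ) * (2 / s) ^ n := by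
  have h1 : (s / 2 * x) ^ n / n ! ≤ Real.exp (s / 2 * x) :=
    le_trans (Finset.single_le_sum (f := fun i => (s / 2 * x) ^ i / i !)
      (fun i _ => by positivity) (Finset.self_mem_range_succ n))
      (Real.sum_le_exp_of_nonneg (by positivity) _)
  rw [div_le_iff₀ (by positivity : (0:ℝ) < (n ! : ℝ))] at h1
  have hsx : x ^ n = (s / 2 * x) ^ n * (2 / s) ^ n := by
    rw [← mul_pow]; congr 1; field_simp
  have h2 : x ^ n ≤ (n ! : ℝ) * (2 / s) ^ n * Real.exp (s / 2 * x) := by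
    rw [hsx]
    calc (s / 2 * x) ^ n * (2 / s) ^ n ≤ Real.exp (s / 2 * x) * (n ! : ℝ) * (2 / s) ^ n := by
          gcongr
      _ = (n ! : ℝ) * (2 / s) ^ n * Real.exp (s / 2 * x) := by ring
  calc x ^ n * Real.exp (-(s * x))
      ≤ (n ! : ℝ) * (2 / s) ^ n * Real.exp (s / 2 * x) * Real.exp (-(s * x)) := by
        gcongr
    _ = (n ! : ℝ) * (2 / s) ^ n * Real.exp (s / 2 * x + -(s * x)) := by
        rw [Real.exp_add]; ring
    _ ≤ (n ! : ℝ) * (2 / s) ^ n * 1 := by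
        refine mul_le_mul_of_nonneg_left ?_ (by positivity)
        rw [Real.exp_le_one_iff]; nlinarith
    _ = (n ! : ℝ) * (2 / s) ^ n := mul_one _

private lemma iteratedDeriv_eventuallyEq {f g : ℝ → ℝ} {x : ℝ} (h : f =ᶠ[nhds x] g) (n : ℕ) :
    iteratedDeriv n f =ᶠ[nhds x] iteratedDeriv n g := by
  induction n with
  | zero => simpa using h
  | succ n ih => rw [iteratedDeriv_succ, iteratedDeriv_succ]; exact ih.deriv

private lemma iteratedDeriv_re_eq (F : ℂ → ℂ) (U : Set ℂ) (hU : IsOpen U)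
    (hF : AnalyticOnNhd ℂ F U) (n : ℕ) :
    ∀ x : ℝ, (x : ℂ) ∈ U →
      iteratedDeriv n (fun y : ℝ => (F y).re) x = (iteratedDeriv n F x).re := by
  induction n with
  | zero => intro x _; simp
  | succ n ih =>
    intro x hx
    have hAn : AnalyticOnNhd ℂ (iteratedDeriv n F) U := by
      clear ih hx
      induction n with
      | zero => simpa using hF
      | succ k ihk => rw [iteratedDeriv_succ]; exact ihk.deriv
    rw [iteratedDeriv_succ, iteratedDeriv_succ]
    have hopen : IsOpen {y : ℝ | (y : ℂ) ∈ U} := hU.preimage Complex.continuous_ofReal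
    have hev : (iteratedDeriv n fun y : ℝ => (F y).re)
        =ᶠ[nhds x] fun y : ℝ => (iteratedDeriv n F y).re :=
      Filter.eventuallyEq_of_mem (hopen.mem_nhds hx) fun y hy => ih y hy
    rw [hev.deriv_eq]
    have hd : HasDerivAt (iteratedDeriv n F) (deriv (iteratedDeriv n F) x) x :=
      ((hAn x hx).differentiableAt).hasDerivAt
    exact hd.real_of_complex.deriv

/-- Let `T = T_t^c` be (the time-`t` marginal of) the subordinator with Laplace
exponent `Ψ_c^α`, i.e. `E[e^{−uT}] = e^{−tΨ_c^α(u)}` for all `u ≥ 0`. Then for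
`0 < u < (m c^γ)^{2/α}/(2c^β)` the exponential moment `E[e^{uT}]` is finite and
equals `exp(−t((−2c^β u + (m c^γ)^{2/α})^{α/2} − m c^γ))`. -/
theorem subordinator_exponential_moment
    {Ω : Type*} [MeasurableSpace Ω] (μ : Measure Ω) [IsProbabilityMeasure μ]
    (α β γ m c t : ℝ) (hα0 : 0 < α) (hα2 : α < 2) (hβ : 0 < β) (hγ : 0 < γ)
    (hm : 0 < m) (hc : 0 < c) (ht : 0 ≤ t)
    (T : Ω → ℝ) (hTmeas : Measurable T) (hTpos : ∀ ω, 0 ≤ T ω)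
    (hLaplace : ∀ u : ℝ, 0 ≤ u →
      ∫ ω, Real.exp (-u * T ω) ∂μ
        = Real.exp (-t * ((2 * c ^ β * u + (m * c ^ γ) ^ (2 / α)) ^ (α / 2) - m * c ^ γ)))
    (u : ℝ) (hu0 : 0 < u) (hu : u < (m * c ^ γ) ^ (2 / α) / (2 * c ^ β)) :
    Integrable (fun ω => Real.exp (u * T ω)) μ ∧
    ∫ ω, Real.exp (u * T ω) ∂μ
      = Real.exp (-t * ((-(2 * c ^ β * u) + (m * c ^ γ) ^ (2 / α)) ^ (α / 2) - m * c ^ γ)) := by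
  -- abbreviations
  set a : ℝ := (m * c ^ γ) ^ (2 / α) with hadef
  set d : ℝ := m * c ^ γ with hddef
  set k : ℝ := 2 * c ^ β with hkdef
  set α2 : ℝ := α / 2 with hα2def
  have hk : 0 < k := by
    have : (0:ℝ) < c ^ β := Real.rpow_pos_of_pos hc β
    rw [hkdef]; linarith
  have hd : 0 < d := by
    have : (0:ℝ) < c ^ γ := Real.rpow_pos_of_pos hc γ
    rw [hddef]; positivity
  have ha : 0 < a := Real.rpow_pos_of_pos hd _
  set r : ℝ := a / k with hrdef
  have hr : 0 < r := div_pos ha hk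
  have hur : u < r := hu
  have hkr : k * r = a := by rw [hrdef]; field_simp
  -- measurability / integrability of the moment integrands
  have hmeas : ∀ (n : ℕ) (s : ℝ),
      Measurable (fun ω => T ω ^ n * Real.exp (-(s * T ω))) := fun n s =>
    (hTmeas.pow_const n).mul ((hTmeas.const_mul s).neg.exp)
  have hInt : ∀ (n : ℕ) (s : ℝ), 0 < s →
      Integrable (fun ω => T ω ^ n * Real.exp (-(s * T ω))) μ := by
    intro n s hs
    refine Integrable.mono' (integrable_const ((n ! : ℝ) * (2 / s) ^ n))
      (hmeas n s).aestronglyMeasurable ?_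
    filter_upwards with ω
    rw [Real.norm_eq_abs,
      abs_of_nonneg (mul_nonneg (pow_nonneg (hTpos ω) n) (Real.exp_nonneg _))]
    exact pow_mul_exp_neg_le n hs (hTpos ω)
  have hDeriv : ∀ (n : ℕ) (s : ℝ), 0 < s →
      HasDerivAt (fun v => ∫ ω, T ω ^ n * Real.exp (-(v * T ω)) ∂μ)
        (-∫ ω, T ω ^ (n + 1) * Real.exp (-(s * T ω)) ∂μ) s := by
    intro n s hs
    have hεpos : (0:ℝ) < s / 2 := by linarith
    have key := hasDerivAt_integral_of_dominated_loc_of_deriv_le (μ := μ)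
        (F := fun v ω => T ω ^ n * Real.exp (-(v * T ω)))
        (F' := fun v ω => -(T ω ^ (n + 1) * Real.exp (-(v * T ω))))
        (x₀ := s) (bound := fun _ => ((n + 1)! : ℝ) * (2 / (s / 2)) ^ (n + 1)) (Metric.ball_mem_nhds s hεpos)
        (Filter.Eventually.of_forall fun v => (hmeas n v).aestronglyMeasurable)
        (hInt n s hs)
        ((hmeas (n + 1) s).neg.aestronglyMeasurable)
        ?_ (integrable_const _) ?_
    · have := key.2
      rwa [integral_neg] at this
    · filter_upwards with ω
      intro v hv
      have hv2 : s / 2 ≤ v := by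
        have := abs_lt.1 (by simpa [Real.dist_eq] using Metric.mem_ball.1 hv)
        linarith [this.1]
      rw [norm_neg, Real.norm_eq_abs,
        abs_of_nonneg (mul_nonneg (pow_nonneg (hTpos ω) _) (Real.exp_nonneg _))]
      calc T ω ^ (n + 1) * Real.exp (-(v * T ω))
          ≤ T ω ^ (n + 1) * Real.exp (-(s / 2 * T ω)) := by
            refine mul_le_mul_of_nonneg_left (Real.exp_le_exp.mpr ?_) (pow_nonneg (hTpos ω) _)
            have := mul_le_mul_of_nonneg_right hv2 (hTpos ω)
            linarith
        _ ≤ ((n + 1)! : ℝ) * (2 / (s / 2)) ^ (n + 1) :=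
            pow_mul_exp_neg_le (n + 1) hεpos (hTpos ω)
    · filter_upwards with ω
      intro v hv
      have h0 : HasDerivAt (fun v : ℝ => -(v * T ω)) (-T ω) v :=
        (hasDerivAt_mul_const (T ω)).neg
      have h1 := (h0.exp).const_mul (T ω ^ n)
      refine h1.congr_deriv ?_
      rw [pow_succ]; ring
  have hIter : ∀ (n : ℕ) (s : ℝ), 0 < s →
      iteratedDeriv n (fun v : ℝ => ∫ ω, Real.exp (-(v * T ω)) ∂μ) s
        = (-1) ^ n * ∫ ω, T ω ^ n * Real.exp (-(s * T ω)) ∂μ := by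
    intro n
    induction n with
    | zero => intro s _; simp
    | succ n ih =>
      intro s hs
      rw [iteratedDeriv_succ]
      have hev : iteratedDeriv n (fun v : ℝ => ∫ ω, Real.exp (-(v * T ω)) ∂μ)
          =ᶠ[nhds s] fun v => (-1 : ℝ) ^ n * ∫ ω, T ω ^ n * Real.exp (-(v * T ω)) ∂μ :=
        Filter.eventuallyEq_of_mem (isOpen_Ioi.mem_nhds hs) fun v hv => ih v hv
      rw [hev.deriv_eq, ((hDeriv n s hs).const_mul ((-1 : ℝ) ^ n)).deriv, pow_succ]
      ring
  -- the complex extension of the Laplace transform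
  set F : ℂ → ℂ := fun z =>
    Complex.exp (-(t : ℂ) * (((k : ℂ) * z + (a : ℂ)) ^ ((α2 : ℝ) : ℂ) - (d : ℂ))) with hFdef
  set U : Set ℂ := {z : ℂ | (k : ℂ) * z + (a : ℂ) ∈ Complex.slitPlane} with hUdef
  have hUopen : IsOpen U :=
    Complex.isOpen_slitPlane.preimage (by fun_prop)
  have hdiff : ∀ z ∈ U, DifferentiableAt ℂ F z := by
    intro z hz
    have h1 : DifferentiableAt ℂ (fun z : ℂ => (k : ℂ) * z + (a : ℂ)) z := by fun_prop
    have h2 := h1.cpow (differentiableAt_const ((α2 : ℝ) : ℂ)) hz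
    exact ((h2.sub_const _).const_mul _).cexp
  have hFan : AnalyticOnNhd ℂ F U :=
    DifferentiableOn.analyticOnNhd (fun z hz => (hdiff z hz).differentiableWithinAt) hUopen
  have hFreal : ∀ x : ℝ, 0 < k * x + a →
      F x = ((Real.exp (-t * ((k * x + a) ^ (α2 : ℝ) - d)) : ℝ) : ℂ) := by
    intro x hx
    have h1 : (k : ℂ) * (x : ℂ) + (a : ℂ) = ((k * x + a : ℝ) : ℂ) := by push_cast; ring
    rw [hFdef]
    simp only [h1, ← Complex.ofReal_cpow hx.le]
    rw [show (-(t:ℂ) * ((((k * x + a) ^ α2 : ℝ)) - (d:ℂ)) : ℂ)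
        = ((-t * ((k * x + a) ^ α2 - d) : ℝ) : ℂ) by push_cast; ring, Complex.ofReal_exp]
  have hball : Metric.ball (1 : ℂ) (1 + r) ⊆ U := by
    intro z hz
    have hzre : |z.re - 1| < 1 + r := by
      calc |z.re - 1| = |(z - 1).re| := by simp
        _ ≤ ‖z - 1‖ := Complex.abs_re_le_norm _
        _ < 1 + r := by simpa [Complex.dist_eq] using Metric.mem_ball.1 hz
    have hzre' : -r < z.re := by have := abs_lt.1 hzre; linarith [this.1]
    refine Or.inl ?_
    have : k * z.re + a > 0 := by nlinarith
    simpa using this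
  have hmem : ((-u : ℝ) : ℂ) ∈ Metric.ball (1 : ℂ) (1 + r) := by
    rw [Metric.mem_ball, Complex.dist_eq]
    have : ((-u : ℝ) : ℂ) - 1 = ((-u - 1 : ℝ) : ℂ) := by push_cast; ring
    rw [this, Complex.norm_real, Real.norm_eq_abs, abs_of_nonpos (by linarith)]
    linarith
  -- Taylor series of F at 1
  have hS := Complex.hasSum_taylorSeries_on_ball
    (fun z hz => (hdiff z (hball hz)).differentiableWithinAt) hmem
  have hS2 := hS.mapL Complex.reCLM
  -- identify the iterated derivatives of F at 1
  have h1U : ((1 : ℝ) : ℂ) ∈ U := by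
    rw [hUdef]; refine Or.inl ?_; simp; nlinarith
  have hre : ∀ n : ℕ, (iteratedDeriv n F 1).re
      = (-1) ^ n * ∫ ω, T ω ^ n * Real.exp (-(1 * T ω)) ∂μ := by
    intro n
    rw [show (1 : ℂ) = ((1 : ℝ) : ℂ) by norm_num,
      ← iteratedDeriv_re_eq F U hUopen hFan n 1 h1U]
    have hev : (fun y : ℝ => (F y).re)
        =ᶠ[nhds (1 : ℝ)] fun v : ℝ => ∫ ω, Real.exp (-(v * T ω)) ∂μ := by
      refine Filter.eventuallyEq_of_mem (isOpen_Ioi.mem_nhds (by norm_num : (0:ℝ) < 1)) ?_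
      intro v hv
      have hkv : 0 < k * v + a := by
        have : 0 < v := hv
        nlinarith
      have h2 := hLaplace v (le_of_lt hv)
      simp only [neg_mul] at h2
      show (F (v : ℝ)).re = ∫ ω, Real.exp (-(v * T ω)) ∂μ
      rw [hFreal v hkv, Complex.ofReal_re, h2, neg_mul]
    rw [(iteratedDeriv_eventuallyEq hev n).self_of_nhds, hIter n 1 one_pos]
  -- the limit value
  have hku : 0 < k * (-u) + a := by nlinarith
  have hlim : (F ((-u : ℝ) : ℂ)).re = Real.exp (-t * ((-(k * u) + a) ^ (α2 : ℝ) - d)) := by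
    rw [hFreal (-u) hku, Complex.ofReal_re]
    norm_num
  -- the real Taylor series
  have hsum : HasSum
      (fun n : ℕ => (n ! : ℝ)⁻¹ * (u + 1) ^ n * ∫ ω, T ω ^ n * Real.exp (-(1 * T ω)) ∂μ)
      (Real.exp (-t * ((-(k * u) + a) ^ (α2 : ℝ) - d))) := by
    rw [← hlim]
    convert hS2 using 2 with n
    have h1 : (((-u : ℝ) : ℂ) - 1) = ((-u - 1 : ℝ) : ℂ) := by push_cast; ring
    have h2 : ((n ! : ℂ))⁻¹ = (((n ! : ℝ)⁻¹ : ℝ) : ℂ) := by push_cast; ring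
    rw [Complex.reCLM_apply, smul_eq_mul, smul_eq_mul, h1, h2, ← Complex.ofReal_pow,
      ← mul_assoc, ← Complex.ofReal_mul, Complex.re_ofReal_mul, hre n]
    have h3 : (-u - 1 : ℝ) ^ n * (-1 : ℝ) ^ n = (u + 1) ^ n := by
      rw [← mul_pow]; congr 1; ring
    rw [mul_assoc, mul_assoc]
    congr 1
    rw [← mul_assoc, h3]
    exact (Complex.reCLM_apply _).symm
  -- pointwise expansion of exp (u * T ω)
  have hterm_nonneg : ∀ (n : ℕ) ω,
      0 ≤ (n ! : ℝ)⁻¹ * (u + 1) ^ n * (T ω ^ n * Real.exp (-(1 * T ω))) := by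
    intro n ω
    have := hTpos ω
    positivity
  have hpt : ∀ ω, HasSum
      (fun n : ℕ => (n ! : ℝ)⁻¹ * (u + 1) ^ n * (T ω ^ n * Real.exp (-(1 * T ω))))
      (Real.exp (u * T ω)) := by
    intro ω
    have h0 := NormedSpace.expSeries_div_hasSum_exp (𝔸 := ℝ) ((u + 1) * T ω)
    have h1 := h0.mul_right (Real.exp (-(1 * T ω)))
    have h2 : (fun n : ℕ => ((u + 1) * T ω) ^ n / n ! * Real.exp (-(1 * T ω)))
        = fun n : ℕ => (n ! : ℝ)⁻¹ * (u + 1) ^ n * (T ω ^ n * Real.exp (-(1 * T ω))) := by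
      funext n; rw [mul_pow]; ring
    rw [h2] at h1
    have h3 : NormedSpace.exp ((u + 1) * T ω) * Real.exp (-(1 * T ω))
        = Real.exp (u * T ω) := by
      rw [← Real.exp_eq_exp_ℝ, ← Real.exp_add]
      congr 1; ring
    rwa [h3] at h1
  have hI_nonneg : ∀ n : ℕ, 0 ≤ ∫ ω, T ω ^ n * Real.exp (-(1 * T ω)) ∂μ := fun n =>
    integral_nonneg fun ω => mul_nonneg (pow_nonneg (hTpos ω) n) (Real.exp_nonneg _)
  have hcoef : ∀ n : ℕ, 0 ≤ (n ! : ℝ)⁻¹ * (u + 1) ^ n := by intro n; positivity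
  have hlin : ∫⁻ ω, ENNReal.ofReal (Real.exp (u * T ω)) ∂μ
      = ENNReal.ofReal (Real.exp (-t * ((-(k * u) + a) ^ (α2 : ℝ) - d))) := by
    have h1 : ∀ ω, ENNReal.ofReal (Real.exp (u * T ω))
        = ∑' n : ℕ, ENNReal.ofReal
            ((n ! : ℝ)⁻¹ * (u + 1) ^ n * (T ω ^ n * Real.exp (-(1 * T ω)))) := by
      intro ω
      rw [← (hpt ω).tsum_eq,
        ENNReal.ofReal_tsum_of_nonneg (fun n => hterm_nonneg n ω) (hpt ω).summable]
    calc ∫⁻ ω, ENNReal.ofReal (Real.exp (u * T ω)) ∂μ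
        = ∫⁻ ω, ∑' n : ℕ, ENNReal.ofReal
            ((n ! : ℝ)⁻¹ * (u + 1) ^ n * (T ω ^ n * Real.exp (-(1 * T ω)))) ∂μ :=
          lintegral_congr h1
      _ = ∑' n : ℕ, ∫⁻ ω, ENNReal.ofReal
            ((n ! : ℝ)⁻¹ * (u + 1) ^ n * (T ω ^ n * Real.exp (-(1 * T ω)))) ∂μ :=
          lintegral_tsum fun n => (((hmeas n 1).const_mul _).ennreal_ofReal).aemeasurable
      _ = ∑' n : ℕ, ENNReal.ofReal
            ((n ! : ℝ)⁻¹ * (u + 1) ^ n * ∫ ω, T ω ^ n * Real.exp (-(1 * T ω)) ∂μ) := by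
          congr 1; funext n
          rw [← ofReal_integral_eq_lintegral_ofReal ((hInt n 1 one_pos).const_mul _)
            (Filter.Eventually.of_forall fun ω => hterm_nonneg n ω), integral_const_mul _ _]
      _ = ENNReal.ofReal (Real.exp (-t * ((-(k * u) + a) ^ (α2 : ℝ) - d))) := by
          rw [← ENNReal.ofReal_tsum_of_nonneg
            (fun n => mul_nonneg (hcoef n) (hI_nonneg n)) hsum.summable]
          exact congrArg ENNReal.ofReal hsum.tsum_eq
  have hfm : Measurable fun ω => Real.exp (u * T ω) := (hTmeas.const_mul u).exp
  have hnn : 0 ≤ᵐ[μ] fun ω => Real.exp (u * T ω) :=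
    Filter.Eventually.of_forall fun ω => Real.exp_nonneg _
  have hint : Integrable (fun ω => Real.exp (u * T ω)) μ := by
    refine ⟨hfm.aestronglyMeasurable, ?_⟩
    rw [hasFiniteIntegral_iff_ofReal hnn, hlin]
    exact ENNReal.ofReal_lt_top
  refine ⟨hint, ?_⟩
  rw [integral_eq_lintegral_of_nonneg_ae hnn hfm.aestronglyMeasurable, hlin,
    ENNReal.toReal_ofReal (Real.exp_nonneg _)]
end

section
/- For one-dimensional Brownian motion B started at 0 and R > 0, t > 0, the reflection principle gives P(max_{0≤s≤t} B_s ≥ R) = 2 P(B_t ≥ R) = (2/√(2πt)) ∫_R^∞ e^{−y²/(2t)} dy. -/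
open Real MeasureTheory Set ProbabilityTheory
open scoped ENNReal NNReal

section core
lemma gauss_symm (v : ℝ≥0) :
    Measure.map (fun x : ℝ => -x) (gaussianReal 0 v) = gaussianReal 0 v := by
  have := gaussianReal_map_const_mul (μ := 0) (v := v) (-1)
  simp only [neg_one_mul, mul_zero] at this
  rw [this]
  congr 1
  ext
  simp

lemma refl_core {Ω α : Type*} [MeasurableSpace Ω] [MeasurableSpace α]
    (μ : Measure Ω) [IsProbabilityMeasure μ]
    (V : Ω → α) (Y : Ω → ℝ) (hV : Measurable V) (hY : Measurable Y)
    (hind : IndepFun V Y μ)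
    (hsym : Measure.map (fun x : ℝ => -x) (Measure.map Y μ) = Measure.map Y μ)
    (A : Set α) (hA : MeasurableSet A) (f : α → ℝ) (hf : Measurable f) :
    μ {ω | V ω ∈ A ∧ Y ω < f (V ω)} = μ {ω | V ω ∈ A ∧ -f (V ω) < Y ω} := by
  have hprod := (indepFun_iff_map_prod_eq_prod_map_map hV.aemeasurable hY.aemeasurable).1 hind
  set ν := Measure.map Y μ with hν
  set P := Measure.map V μ with hP
  have hT : Measurable fun ω => (V ω, Y ω) := hV.prodMk hY
  have hs1 : MeasurableSet {p : α × ℝ | p.1 ∈ A ∧ p.2 < f p.1} := by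
    refine (hA.preimage measurable_fst).inter ?_
    exact measurableSet_lt measurable_snd (hf.comp measurable_fst)
  have hs2 : MeasurableSet {p : α × ℝ | p.1 ∈ A ∧ -f p.1 < p.2} := by
    refine (hA.preimage measurable_fst).inter ?_
    exact measurableSet_lt ((hf.comp measurable_fst).neg) measurable_snd
  have h1 : μ {ω | V ω ∈ A ∧ Y ω < f (V ω)}
      = (P.prod ν) {p : α × ℝ | p.1 ∈ A ∧ p.2 < f p.1} := by
    rw [← hprod, Measure.map_apply hT hs1]; rfl
  have h2 : μ {ω | V ω ∈ A ∧ -f (V ω) < Y ω}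
      = (P.prod ν) {p : α × ℝ | p.1 ∈ A ∧ -f p.1 < p.2} := by
    rw [← hprod, Measure.map_apply hT hs2]; rfl
  have hslice : ∀ c : ℝ, ν (Iio c) = ν (Ioi (-c)) := by
    intro c
    conv_lhs => rw [← hsym]
    rw [Measure.map_apply measurable_neg measurableSet_Iio]
    congr 1
    ext y
    simp [neg_lt, lt_neg]
  rw [h1, h2, Measure.prod_apply hs1, Measure.prod_apply hs2]
  refine lintegral_congr fun v => ?_
  by_cases hv : v ∈ A
  · have e1 : (Prod.mk v ⁻¹' {p : α × ℝ | p.1 ∈ A ∧ p.2 < f p.1}) = Iio (f v) := by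
      ext y; simp [hv]
    have e2 : (Prod.mk v ⁻¹' {p : α × ℝ | p.1 ∈ A ∧ -f p.1 < p.2}) = Ioi (-f v) := by
      ext y; simp [hv]
    rw [e1, e2, hslice]
  · have e1 : (Prod.mk v ⁻¹' {p : α × ℝ | p.1 ∈ A ∧ p.2 < f p.1}) = ∅ := by
      ext y; simp [hv]
    have e2 : (Prod.mk v ⁻¹' {p : α × ℝ | p.1 ∈ A ∧ -f p.1 < p.2}) = ∅ := by
      ext y; simp [hv]
    rw [e1, e2]
end core

section discrete

variable {Ω : Type*} [MeasurableSpace Ω] (μ : Measure Ω) [IsProbabilityMeasure μ]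
  (S : ℕ → Ω → ℝ) (m : ℕ) (r : ℝ)

/-- first-passage event at index k -/
def Efp (S : ℕ → Ω → ℝ) (r : ℝ) (k : ℕ) : Set Ω :=
  {ω | r ≤ S k ω ∧ ∀ j, j < k → S j ω < r}

variable (hmeas : ∀ k, Measurable (S k)) (h0 : ∀ ω, S 0 ω = 0) (hr : 0 < r)

include hmeas in
lemma Efp_measurable (k : ℕ) : MeasurableSet (Efp S r k) := by
  have : Efp S r k = {ω | r ≤ S k ω} ∩ ⋂ j, ⋂ (_ : j < k), {ω | S j ω < r} := by
    ext ω; simp [Efp]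
  rw [this]
  exact (measurableSet_le measurable_const (hmeas k)).inter
    (MeasurableSet.iInter fun j => MeasurableSet.iInter fun _ =>
      measurableSet_lt (hmeas j) measurable_const)

lemma Efp_disjoint : ∀ k l, k ≠ l → Disjoint (Efp S r k) (Efp S r l) := by
  have key : ∀ k l, k < l → Disjoint (Efp S r k) (Efp S r l) := by
    intro k l hkl
    refine Set.disjoint_left.2 fun ω hk hl => ?_
    exact absurd hk.1 (not_le.2 (hl.2 k hkl))
  intro k l hkl
  rcases lt_or_gt_of_ne hkl with h | h
  · exact key k l h
  · exact (key l k h).symm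

lemma Efp_union :
    {ω | ∃ k, k ≤ m ∧ r ≤ S k ω} = ⋃ k ∈ Finset.range (m + 1), Efp S r k := by
  ext ω
  simp only [Set.mem_setOf_eq, Set.mem_iUnion, Finset.mem_range, Nat.lt_succ_iff]
  constructor
  · rintro ⟨k, hk, hrk⟩
    have hex : ∃ j, r ≤ S j ω := ⟨k, hrk⟩
    refine ⟨Nat.find hex, le_trans (Nat.find_le hrk) hk, Nat.find_spec hex, ?_⟩
    intro j hj
    exact lt_of_not_ge (Nat.find_min hex hj)
  · rintro ⟨k, hk, hrk, -⟩
    exact ⟨k, hk, hrk⟩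

include hmeas in
lemma Efp_reflect
    (hind : ∀ k, k < m → IndepFun (fun ω => fun i : Fin (k+1) => S i ω)
      (fun ω => S m ω - S k ω) μ)
    (hsym : ∀ k, k < m → Measure.map (fun x : ℝ => -x)
      (Measure.map (fun ω => S m ω - S k ω) μ) = Measure.map (fun ω => S m ω - S k ω) μ)
    (k : ℕ) (hk : k ≤ m) :
    μ (Efp S r k ∩ {ω | S m ω < r}) = μ (Efp S r k ∩ {ω | 2 * S k ω - r < S m ω}) := by
  rcases eq_or_lt_of_le hk with rfl | hk'
  · have e1 : Efp S r k ∩ {ω | S k ω < r} = ∅ := by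
      ext ω; simp only [Set.mem_inter_iff, Set.mem_empty_iff_false, iff_false, not_and,
        Set.mem_setOf_eq, Efp]
      rintro ⟨h1, -⟩; exact not_lt.2 h1
    have e2 : Efp S r k ∩ {ω | 2 * S k ω - r < S k ω} = ∅ := by
      ext ω; simp only [Set.mem_inter_iff, Set.mem_empty_iff_false, iff_false, not_and,
        Set.mem_setOf_eq, Efp]
      rintro ⟨h1, -⟩; linarith
    rw [e1, e2]
  · set V : Ω → (Fin (k+1) → ℝ) := fun ω => fun i : Fin (k+1) => S i ω with hV
    set Y : Ω → ℝ := fun ω => S m ω - S k ω with hY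
    set A : Set (Fin (k+1) → ℝ) :=
      {v | r ≤ v (Fin.last k)} ∩ ⋂ j : Fin (k+1), ⋂ (_ : (j : ℕ) < k), {v | v j < r} with hA
    have hAmeas : MeasurableSet A :=
      (measurableSet_le measurable_const (measurable_pi_apply _)).inter
        (MeasurableSet.iInter fun j => MeasurableSet.iInter fun _ =>
          measurableSet_lt (measurable_pi_apply _) measurable_const)
    set f : (Fin (k+1) → ℝ) → ℝ := fun v => r - v (Fin.last k) with hf
    have hfmeas : Measurable f := measurable_const.sub (measurable_pi_apply _)
    have hVmeas : Measurable V := measurable_pi_lambda _ fun i => hmeas i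
    have hYmeas : Measurable Y := (hmeas m).sub (hmeas k)
    have hmemA : ∀ ω, V ω ∈ A ↔ ω ∈ Efp S r k := by
      intro ω
      simp only [hA, hV, Set.mem_inter_iff, Set.mem_setOf_eq, Set.mem_iInter, Efp,
        Fin.val_last]
      constructor
      · rintro ⟨h1, h2⟩
        refine ⟨h1, fun j hj => ?_⟩
        exact h2 ⟨j, lt_trans hj (Nat.lt_succ_self k)⟩ hj
      · rintro ⟨h1, h2⟩
        exact ⟨h1, fun j hj => h2 j hj⟩
    have := refl_core μ V Y hVmeas hYmeas (hind k hk') (hsym k hk') A hAmeas f hfmeas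
    have e1 : {ω | V ω ∈ A ∧ Y ω < f (V ω)} = Efp S r k ∩ {ω | S m ω < r} := by
      ext ω
      simp only [Set.mem_setOf_eq, Set.mem_inter_iff, Set.mem_inter_iff, hY, hf, hV, Fin.val_last]
      rw [hmemA ω]
      constructor
      · rintro ⟨h1, h2⟩; exact ⟨h1, by linarith⟩
      · rintro ⟨h1, h2⟩; exact ⟨h1, by linarith⟩
    have e2 : {ω | V ω ∈ A ∧ -f (V ω) < Y ω} = Efp S r k ∩ {ω | 2 * S k ω - r < S m ω} := by
      ext ω
      simp only [Set.mem_setOf_eq, Set.mem_inter_iff, Set.mem_inter_iff, hY, hf, hV, Fin.val_last]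
      rw [hmemA ω]
      constructor
      · rintro ⟨h1, h2⟩; exact ⟨h1, by linarith⟩
      · rintro ⟨h1, h2⟩; exact ⟨h1, by linarith⟩
    rw [e1, e2] at this
    exact this


include hmeas in
lemma Efp_sum_inter (C : Set Ω) (hC : MeasurableSet C) :
    ∑ k ∈ Finset.range (m + 1), μ (Efp S r k ∩ C)
      = μ ({ω | ∃ k, k ≤ m ∧ r ≤ S k ω} ∩ C) := by
  rw [Efp_union S m r, Set.iUnion₂_inter]
  refine (measure_biUnion_finset ?_ ?_).symm
  · intro k _ l _ hkl
    exact (Efp_disjoint S r k l hkl).mono Set.inter_subset_left Set.inter_subset_left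
  · exact fun k _ => ((Efp_measurable S r hmeas k).inter hC)

include hmeas h0 hr in
lemma discrete_upper
    (hind : ∀ k, k < m → IndepFun (fun ω => fun i : Fin (k+1) => S i ω)
      (fun ω => S m ω - S k ω) μ)
    (hsym : ∀ k, k < m → Measure.map (fun x : ℝ => -x)
      (Measure.map (fun ω => S m ω - S k ω) μ) = Measure.map (fun ω => S m ω - S k ω) μ) :
    μ {ω | ∃ k, k ≤ m ∧ r ≤ S k ω} ≤ μ {ω | r < S m ω} + μ {ω | r ≤ S m ω} := by
  have hU : μ {ω | ∃ k, k ≤ m ∧ r ≤ S k ω}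
      = ∑ k ∈ Finset.range (m + 1), μ (Efp S r k) := by
    rw [Efp_union S m r]
    refine measure_biUnion_finset ?_ ?_
    · intro k _ l _ hkl
      exact Efp_disjoint S r k l hkl
    · exact fun k _ => Efp_measurable S r hmeas k
  have hsplit : ∀ k, μ (Efp S r k)
      = μ (Efp S r k ∩ {ω | S m ω < r}) + μ (Efp S r k ∩ {ω | r ≤ S m ω}) := by
    intro k
    have h := measure_inter_add_diff (μ := μ) (t := {ω | S m ω < r}) (Efp S r k)
      (measurableSet_lt (hmeas m) measurable_const)
    have hdiff : Efp S r k \ {ω | S m ω < r} = Efp S r k ∩ {ω | r ≤ S m ω} := by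
      ext ω; simp [Set.mem_diff, not_lt]
    rw [hdiff] at h
    exact h.symm
  rw [hU]
  calc ∑ k ∈ Finset.range (m + 1), μ (Efp S r k)
      = ∑ k ∈ Finset.range (m + 1), μ (Efp S r k ∩ {ω | S m ω < r})
        + ∑ k ∈ Finset.range (m + 1), μ (Efp S r k ∩ {ω | r ≤ S m ω}) := by
        rw [← Finset.sum_add_distrib]
        exact Finset.sum_congr rfl fun k _ => hsplit k
    _ ≤ μ {ω | r < S m ω} + μ {ω | r ≤ S m ω} := by
        gcongr
        · calc ∑ k ∈ Finset.range (m + 1), μ (Efp S r k ∩ {ω | S m ω < r})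
              = ∑ k ∈ Finset.range (m + 1), μ (Efp S r k ∩ {ω | 2 * S k ω - r < S m ω}) := by
                refine Finset.sum_congr rfl fun k hk => ?_
                exact Efp_reflect μ S m r hmeas hind hsym k (Nat.lt_succ_iff.1 (Finset.mem_range.1 hk))
            _ ≤ ∑ k ∈ Finset.range (m + 1), μ (Efp S r k ∩ {ω | r < S m ω}) := by
                refine Finset.sum_le_sum fun k _ => measure_mono ?_
                rintro ω ⟨hE, hlt⟩
                refine ⟨hE, ?_⟩
                have h1 : r ≤ S k ω := hE.1
                have h2 : (2 : ℝ) * S k ω - r < S m ω := hlt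
                simp only [Set.mem_setOf_eq]
                linarith
            _ = μ ({ω | ∃ k, k ≤ m ∧ r ≤ S k ω} ∩ {ω | r < S m ω}) :=
                Efp_sum_inter μ S m r hmeas _ (measurableSet_lt measurable_const (hmeas m))
            _ ≤ μ {ω | r < S m ω} := measure_mono Set.inter_subset_right
        · calc ∑ k ∈ Finset.range (m + 1), μ (Efp S r k ∩ {ω | r ≤ S m ω})
              = μ ({ω | ∃ k, k ≤ m ∧ r ≤ S k ω} ∩ {ω | r ≤ S m ω}) :=
                Efp_sum_inter μ S m r hmeas _ (measurableSet_le measurable_const (hmeas m))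
            _ ≤ μ {ω | r ≤ S m ω} := measure_mono Set.inter_subset_right

include hmeas h0 hr in
lemma discrete_lower (ε : ℝ) (hε : 0 < ε)
    (hind : ∀ k, k < m → IndepFun (fun ω => fun i : Fin (k+1) => S i ω)
      (fun ω => S m ω - S k ω) μ)
    (hsym : ∀ k, k < m → Measure.map (fun x : ℝ => -x)
      (Measure.map (fun ω => S m ω - S k ω) μ) = Measure.map (fun ω => S m ω - S k ω) μ) :
    μ {ω | r + 2 * ε < S m ω} + μ {ω | r ≤ S m ω}
      ≤ μ {ω | ∃ k, k ≤ m ∧ r ≤ S k ω}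
        + μ {ω | ∃ k, k < m ∧ ε < S (k+1) ω - S k ω} := by
  set Bad : Set Ω := {ω | ∃ k, k < m ∧ ε < S (k+1) ω - S k ω} with hBad
  have hBadMeas : MeasurableSet Bad := by
    have : Bad = ⋃ k, ⋃ (_ : k < m), {ω | ε < S (k+1) ω - S k ω} := by
      ext ω; simp [hBad]
    rw [this]
    exact MeasurableSet.iUnion fun k => MeasurableSet.iUnion fun _ =>
      measurableSet_lt measurable_const ((hmeas (k+1)).sub (hmeas k))
  have hUm : μ {ω | ∃ k, k ≤ m ∧ r ≤ S k ω}
      = ∑ k ∈ Finset.range (m + 1), μ (Efp S r k) := by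
    rw [Efp_union S m r]
    refine measure_biUnion_finset ?_ ?_
    · intro k _ l _ hkl
      exact Efp_disjoint S r k l hkl
    · exact fun k _ => Efp_measurable S r hmeas k
  -- first term
  have hsub1 : {ω | r + 2 * ε < S m ω} ⊆ {ω | ∃ k, k ≤ m ∧ r ≤ S k ω} := by
    intro ω hω
    exact ⟨m, le_refl m, by simp only [Set.mem_setOf_eq] at hω ⊢; linarith⟩
  have h1 : μ {ω | r + 2 * ε < S m ω}
      = ∑ k ∈ Finset.range (m + 1), μ (Efp S r k ∩ {ω | r + 2 * ε < S m ω}) := by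
    rw [Efp_sum_inter μ S m r hmeas _ (measurableSet_lt measurable_const (hmeas m)),
      Set.inter_eq_self_of_subset_right hsub1]
  have hsub2 : {ω | r ≤ S m ω} ⊆ {ω | ∃ k, k ≤ m ∧ r ≤ S k ω} :=
    fun ω hω => ⟨m, le_refl m, hω⟩
  have h2 : μ {ω | r ≤ S m ω}
      = ∑ k ∈ Finset.range (m + 1), μ (Efp S r k ∩ {ω | r ≤ S m ω}) := by
    rw [Efp_sum_inter μ S m r hmeas _ (measurableSet_le measurable_const (hmeas m)),
      Set.inter_eq_self_of_subset_right hsub2]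
  -- per-k bound for the first term
  have hper : ∀ k, k ≤ m → μ (Efp S r k ∩ {ω | r + 2 * ε < S m ω})
      ≤ μ (Efp S r k ∩ {ω | S m ω < r}) + μ (Efp S r k ∩ Bad) := by
    intro k hk
    have hsubk : Efp S r k ∩ {ω | r + 2 * ε < S m ω}
        ⊆ (Efp S r k ∩ {ω | S k ω ≤ r + ε} ∩ {ω | r + 2 * ε < S m ω}) ∪ (Efp S r k ∩ Bad) := by
      rintro ω ⟨hE, hS⟩
      by_cases hle : S k ω ≤ r + ε
      · exact Or.inl ⟨⟨hE, hle⟩, hS⟩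
      · right
        refine ⟨hE, ?_⟩
        push_neg at hle
        have hk0 : k ≠ 0 := by
          intro h0k
          rw [h0k] at hE
          have := hE.1
          rw [h0 ω] at this
          linarith
        obtain ⟨j, rfl⟩ := Nat.exists_eq_succ_of_ne_zero hk0
        have hjm : j < m := lt_of_lt_of_le (Nat.lt_succ_self j) hk
        have hjr : S j ω < r := hE.2 j (Nat.lt_succ_self j)
        exact ⟨j, hjm, by linarith⟩
    calc μ (Efp S r k ∩ {ω | r + 2 * ε < S m ω})
        ≤ μ (Efp S r k ∩ {ω | S k ω ≤ r + ε} ∩ {ω | r + 2 * ε < S m ω})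
          + μ (Efp S r k ∩ Bad) := le_trans (measure_mono hsubk) (measure_union_le _ _)
      _ ≤ μ (Efp S r k ∩ {ω | 2 * S k ω - r < S m ω}) + μ (Efp S r k ∩ Bad) := by
          refine add_le_add (measure_mono ?_) le_rfl
          intro ω hω
          have hC : r + 2 * ε < S m ω := hω.2
          have hB : S k ω ≤ r + ε := hω.1.2
          have hE : ω ∈ Efp S r k := hω.1.1
          have hE1 : r ≤ S k ω := hE.1
          refine ⟨hE, ?_⟩
          show 2 * S k ω - r < S m ω
          linarith
      _ = μ (Efp S r k ∩ {ω | S m ω < r}) + μ (Efp S r k ∩ Bad) := by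
          rw [Efp_reflect μ S m r hmeas hind hsym k hk]
  calc μ {ω | r + 2 * ε < S m ω} + μ {ω | r ≤ S m ω}
      = ∑ k ∈ Finset.range (m + 1), μ (Efp S r k ∩ {ω | r + 2 * ε < S m ω})
        + ∑ k ∈ Finset.range (m + 1), μ (Efp S r k ∩ {ω | r ≤ S m ω}) := by rw [h1, h2]
    _ ≤ (∑ k ∈ Finset.range (m + 1),
          (μ (Efp S r k ∩ {ω | S m ω < r}) + μ (Efp S r k ∩ Bad)))
        + ∑ k ∈ Finset.range (m + 1), μ (Efp S r k ∩ {ω | r ≤ S m ω}) := by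
        gcongr with k hk
        exact hper k (Nat.lt_succ_iff.1 (Finset.mem_range.1 hk))
    _ = (∑ k ∈ Finset.range (m + 1), μ (Efp S r k ∩ {ω | S m ω < r})
        + ∑ k ∈ Finset.range (m + 1), μ (Efp S r k ∩ {ω | r ≤ S m ω}))
        + ∑ k ∈ Finset.range (m + 1), μ (Efp S r k ∩ Bad) := by
        rw [Finset.sum_add_distrib]; ring
    _ ≤ μ {ω | ∃ k, k ≤ m ∧ r ≤ S k ω} + μ Bad := by
        gcongr
        · rw [hUm, ← Finset.sum_add_distrib]
          refine Finset.sum_le_sum fun k _ => ?_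
          have h := measure_inter_add_diff (μ := μ) (t := {ω | S m ω < r}) (Efp S r k)
            (measurableSet_lt (hmeas m) measurable_const)
          have hdiff : Efp S r k \ {ω | S m ω < r} = Efp S r k ∩ {ω | r ≤ S m ω} := by
            ext ω; simp [Set.mem_diff, not_lt]
          rw [hdiff] at h
          exact le_of_eq h
        · calc ∑ k ∈ Finset.range (m + 1), μ (Efp S r k ∩ Bad)
              = μ ({ω | ∃ k, k ≤ m ∧ r ≤ S k ω} ∩ Bad) := Efp_sum_inter μ S m r hmeas Bad hBadMeas
            _ ≤ μ Bad := measure_mono Set.inter_subset_right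

end discrete


/-- A standard one-dimensional Brownian motion starting at `0`: continuous paths,
`B 0 = 0`, Gaussian stationary increments, and independent increments. -/
def IsStandardBM {Ω : Type*} [MeasurableSpace Ω] (μ : Measure Ω)
    (B : ℝ → Ω → ℝ) : Prop :=
  (∀ ω, B 0 ω = 0) ∧
  (∀ ω, Continuous fun t => B t ω) ∧
  (∀ t, Measurable (B t)) ∧
  (∀ s t : ℝ, 0 ≤ s → s ≤ t →
    Measure.map (fun ω => B t ω - B s ω) μ = gaussianReal 0 (t - s).toNNReal) ∧
  (∀ (n : ℕ) (ts : Fin (n + 1) → ℝ), Monotone ts → (∀ i, 0 ≤ ts i) →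
    iIndepFun
      (fun i : Fin n => fun ω => B (ts i.succ) ω - B (ts i.castSucc) ω) μ)

section grid

variable {Ω : Type*} [MeasurableSpace Ω]

/-- values of `B` along the grid `k * t / m`, capped at `m`. -/
noncomputable def gridS (B : ℝ → Ω → ℝ) (t : ℝ) (m : ℕ) : ℕ → Ω → ℝ :=
  fun k ω => B ((min k m : ℕ) * t / m) ω

variable (μ : Measure Ω) [IsProbabilityMeasure μ] (B : ℝ → Ω → ℝ) (t : ℝ) (m : ℕ)

lemma gridS_eq (k : ℕ) (hk : k ≤ m) : gridS B t m k = fun ω => B ((k : ℝ) * t / m) ω := by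
  funext ω
  simp [gridS, min_eq_left hk]

lemma gridS_last (hm : 1 ≤ m) (ht : 0 < t) : gridS B t m m = B t := by
  funext ω
  have hm' : (m : ℝ) ≠ 0 := Nat.cast_ne_zero.2 (by omega)
  simp [gridS, min_self]
  congr 1
  field_simp

lemma gridS_meas (hB : IsStandardBM μ B) (k : ℕ) : Measurable (gridS B t m k) :=
  hB.2.2.1 _

lemma gridS_zero (hB : IsStandardBM μ B) (ω : Ω) : gridS B t m 0 ω = 0 := by
  simp [gridS]
  exact hB.1 ω

lemma gridS_sub_map (hB : IsStandardBM μ B) (ht : 0 < t) (hm : 1 ≤ m) (k : ℕ) (hk : k ≤ m) :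
    Measure.map (fun ω => gridS B t m m ω - gridS B t m k ω) μ
      = gaussianReal 0 (t - (k : ℝ) * t / m).toNNReal := by
  have hm0 : (0:ℝ) < m := by positivity
  have hle : (k : ℝ) * t / m ≤ t := by
    rw [div_le_iff₀ hm0]
    have : (k:ℝ) ≤ m := Nat.cast_le.2 hk
    nlinarith
  have h0 : (0:ℝ) ≤ (k : ℝ) * t / m := by positivity
  have := hB.2.2.2.1 ((k : ℝ) * t / m) t h0 hle
  rw [gridS_last B t m hm ht, gridS_eq B t m k hk]
  exact this

lemma gridS_sym (hB : IsStandardBM μ B) (ht : 0 < t) (hm : 1 ≤ m) (k : ℕ) (hk : k ≤ m) :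
    Measure.map (fun x : ℝ => -x)
      (Measure.map (fun ω => gridS B t m m ω - gridS B t m k ω) μ)
      = Measure.map (fun ω => gridS B t m m ω - gridS B t m k ω) μ := by
  rw [gridS_sub_map μ B t m hB ht hm k hk]
  exact gauss_symm _

lemma gridS_indep (hB : IsStandardBM μ B) (ht : 0 < t) (hm : 1 ≤ m) (k : ℕ) (hk : k < m) :
    IndepFun (fun ω => fun i : Fin (k+1) => gridS B t m i ω)
      (fun ω => gridS B t m m ω - gridS B t m k ω) μ := by
  obtain ⟨h0B, hcont, hmeasB, hgauss, hiind⟩ := hB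
  have hm0 : (0:ℝ) < m := by positivity
  have hgrid_le : ∀ a : ℕ, a ≤ m → (a : ℝ) * t / m ≤ t := by
    intro a ha
    rw [div_le_iff₀ hm0]
    have : (a:ℝ) ≤ m := Nat.cast_le.2 ha
    nlinarith
  set ts : Fin (k+2) → ℝ := fun i => if (i:ℕ) ≤ k then (i:ℕ) * t / m else t with hts
  have hts_mono : Monotone ts := by
    intro i j hij
    have hij' : (i:ℕ) ≤ (j:ℕ) := hij
    simp only [hts]
    by_cases hi : (i:ℕ) ≤ k
    · by_cases hjj : (j:ℕ) ≤ k
      · simp only [hi, hjj, if_true]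
        have : ((i:ℕ):ℝ) ≤ ((j:ℕ):ℝ) := Nat.cast_le.2 hij'
        have ht' := le_of_lt ht
        gcongr
      · simp only [hi, hjj, if_true, if_false]
        exact hgrid_le _ (le_trans hi (le_of_lt hk))
    · have hjj : ¬ ((j:ℕ) ≤ k) := fun h => hi (le_trans hij' h)
      simp [hi, hjj]
  have hts_nonneg : ∀ i, 0 ≤ ts i := by
    intro i
    simp only [hts]
    split
    · positivity
    · exact le_of_lt ht
  have hX := hiind (k+1) ts hts_mono hts_nonneg
  set X : Fin (k+1) → Ω → ℝ := fun i ω => B (ts i.succ) ω - B (ts i.castSucc) ω with hXdef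
  have hXmeas : ∀ i, Measurable (X i) := fun i => (hmeasB _).sub (hmeasB _)
  set Sfin : Finset (Fin (k+1)) := Finset.univ.filter (fun i => (i:ℕ) < k) with hSfin
  set Tfin : Finset (Fin (k+1)) := {Fin.last k} with hTfin
  have hdisj : Disjoint Sfin Tfin := by
    rw [Finset.disjoint_left]
    intro i hi hi'
    simp only [hSfin, Finset.mem_filter, Finset.mem_univ, true_and] at hi
    simp only [hTfin, Finset.mem_singleton] at hi'
    rw [hi'] at hi
    simp [Fin.val_last] at hi
  have hbase := hX.indepFun_finset Sfin Tfin hdisj hXmeas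
  set φ : ({x : Fin (k+1) // x ∈ Sfin} → ℝ) → (Fin (k+1) → ℝ) :=
    fun x j => ∑ i ∈ Sfin.attach, if ((i : Fin (k+1)) : ℕ) < (j:ℕ) then x i else 0 with hφ
  set ψ : ({x : Fin (k+1) // x ∈ Tfin} → ℝ) → ℝ :=
    fun y => y ⟨Fin.last k, by simp [hTfin]⟩ with hψ
  have hφmeas : Measurable φ := by
    refine measurable_pi_lambda _ fun j => ?_
    refine Finset.measurable_sum _ fun i _ => ?_
    by_cases h : ((i : Fin (k+1)) : ℕ) < (j:ℕ)
    · simpa [h] using measurable_pi_apply i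
    · simpa [h] using (measurable_const : Measurable fun _ : ({x : Fin (k+1) // x ∈ Sfin} → ℝ) => (0:ℝ))
  have hψmeas : Measurable ψ := measurable_pi_apply _
  have hres := hbase.comp hφmeas hψmeas
  -- telescoping identity
  have key : ∀ (ω : Ω) (j : ℕ), j ≤ k →
      (∑ i ∈ Sfin.attach, if ((i : Fin (k+1)) : ℕ) < j then X i ω else 0)
        = B ((j:ℝ) * t / m) ω := by
    intro ω j
    induction j with
    | zero =>
      intro _
      rw [Finset.sum_eq_zero (fun i _ => by simp)]
      norm_num
      exact (h0B ω).symm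
    | succ j ih =>
      intro hj
      have hj' : j ≤ k := Nat.le_of_succ_le hj
      have hjk : j < k := hj
      have hsplit : ∀ i ∈ Sfin.attach,
          (if ((i : Fin (k+1)) : ℕ) < j + 1 then X i ω else 0)
            = (if ((i : Fin (k+1)) : ℕ) < j then X i ω else 0)
              + (if ((i : Fin (k+1)) : ℕ) = j then X i ω else 0) := by
        intro i _
        by_cases h1 : ((i : Fin (k+1)) : ℕ) < j
        · have h2 : ((i : Fin (k+1)) : ℕ) ≠ j := by omega
          have h3 : ((i : Fin (k+1)) : ℕ) < j + 1 := by omega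
          simp [h1, h2, h3]
        · by_cases h2 : ((i : Fin (k+1)) : ℕ) = j
          · have h3 : ((i : Fin (k+1)) : ℕ) < j + 1 := by omega
            simp [h1, h2, h3]
          · have h3 : ¬ (((i : Fin (k+1)) : ℕ) < j + 1) := by omega
            simp [h1, h2, h3]
      rw [Finset.sum_congr rfl hsplit, Finset.sum_add_distrib, ih hj']
      have hmem : (⟨⟨j, by omega⟩, by simp [hSfin, hjk]⟩ : {x : Fin (k+1) // x ∈ Sfin})
          ∈ Sfin.attach := Finset.mem_attach _ _
      have hsingle : (∑ i ∈ Sfin.attach, if ((i : Fin (k+1)) : ℕ) = j then X i ω else 0)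
          = X ⟨j, by omega⟩ ω := by
        rw [Finset.sum_eq_single_of_mem _ hmem]
        · simp
        · intro b _ hb
          have : ((b : Fin (k+1)) : ℕ) ≠ j := by
            intro hbj
            apply hb
            apply Subtype.ext
            apply Fin.ext
            exact hbj
          simp [this]
      rw [hsingle]
      have hsucc_le : ((⟨j, by omega⟩ : Fin (k+1)).succ : ℕ) ≤ k := by
        simpa using hj
      have hXj : X ⟨j, by omega⟩ ω = B (((j:ℝ) + 1) * t / m) ω - B ((j:ℝ) * t / m) ω := by
        simp only [hXdef, hts]
        have e1 : ((⟨j, by omega⟩ : Fin (k+1)).succ : ℕ) = j + 1 := rfl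
        have e2 : ((⟨j, by omega⟩ : Fin (k+1)).castSucc : ℕ) = j := rfl
        rw [e1, e2] at *
        simp only [hj, hj', if_pos]
        push_cast
        ring_nf
      rw [hXj]
      push_cast
      ring
  -- identify the two composed maps
  have hleft : (φ ∘ fun ω (i : {x : Fin (k+1) // x ∈ Sfin}) => X i ω)
      = fun ω => fun i : Fin (k+1) => gridS B t m i ω := by
    funext ω j
    have hjle : (j : ℕ) ≤ k := Nat.lt_succ_iff.1 j.isLt
    have := key ω (j : ℕ) hjle
    simp only [Function.comp_apply, hφ]
    rw [this, gridS]
    congr 2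
    rw [min_eq_left (le_trans hjle (le_of_lt hk))]
  have hright : (ψ ∘ fun ω (i : {x : Fin (k+1) // x ∈ Tfin}) => X i ω)
      = fun ω => gridS B t m m ω - gridS B t m k ω := by
    funext ω
    simp only [Function.comp_apply, hψ, hXdef, hts]
    have e1 : ((Fin.last k).succ : ℕ) = k + 1 := rfl
    have e2 : ((Fin.last k).castSucc : ℕ) = k := rfl
    rw [e1, e2]
    have h1 : ¬ (k + 1 ≤ k) := by omega
    have h2 : k ≤ k := le_refl k
    simp only [h1, h2, if_false, if_true]
    have hg1 : gridS B t m m ω = B t ω := by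
      rw [gridS_last B t m (by omega) ht]
    have hg2 : gridS B t m k ω = B ((k:ℝ) * t / m) ω := by
      rw [gridS_eq B t m k (le_of_lt hk)]
    rw [hg1, hg2]
  rw [hleft, hright] at hres
  exact hres

end grid


section limits
variable {Ω : Type*} [MeasurableSpace Ω] (B : ℝ → Ω → ℝ) (t : ℝ)

lemma bm_bddAbove (hcont : ∀ ω, Continuous fun u => B u ω) (ω : Ω) :
    BddAbove (Set.range fun s : Icc (0:ℝ) t => B (s:ℝ) ω) := by
  have h := (isCompact_Icc (a := (0:ℝ)) (b := t)).bddAbove_image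
    ((hcont ω).continuousOn (s := Icc 0 t))
  have : (Set.range fun s : Icc (0:ℝ) t => B (s:ℝ) ω)
      = (fun u => B u ω) '' (Icc 0 t) := by
    ext x
    constructor
    · rintro ⟨⟨s, hs⟩, rfl⟩; exact ⟨s, hs, rfl⟩
    · rintro ⟨s, hs, rfl⟩; exact ⟨⟨s, hs⟩, rfl⟩
  rw [this]
  exact h

lemma grid_mem_Icc (ht : 0 < t) (m : ℕ) (hm : 1 ≤ m) (k : ℕ) (hk : k ≤ m) :
    (k : ℝ) * t / m ∈ Icc (0:ℝ) t := by
  have hm0 : (0:ℝ) < m := by positivity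
  constructor
  · positivity
  · rw [div_le_iff₀ hm0]
    have : (k:ℝ) ≤ m := Nat.cast_le.2 hk
    nlinarith

lemma grid_le_sup (hcont : ∀ ω, Continuous fun u => B u ω) (ht : 0 < t)
    (m : ℕ) (hm : 1 ≤ m) (k : ℕ) (hk : k ≤ m) (ω : Ω) :
    B ((k : ℝ) * t / m) ω ≤ ⨆ s : Icc (0:ℝ) t, B (s:ℝ) ω :=
  le_ciSup (bm_bddAbove B t hcont ω) (⟨(k : ℝ) * t / m, grid_mem_Icc t ht m hm k hk⟩ : Icc (0:ℝ) t)

lemma G_subset_sup (hcont : ∀ ω, Continuous fun u => B u ω) (ht : 0 < t) (n : ℕ) (r : ℝ) :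
    {ω | ∃ k : ℕ, k ≤ 2^n ∧ r ≤ B ((k:ℝ) * t / (2^n : ℕ)) ω}
      ⊆ {ω | r ≤ ⨆ s : Icc (0:ℝ) t, B (s:ℝ) ω} := by
  rintro ω ⟨k, hk, hrk⟩
  exact le_trans hrk (by
    have := grid_le_sup B t hcont ht (2^n) (Nat.one_le_two_pow) k hk ω
    simpa using this)

lemma G_mono (r : ℝ) :
    Monotone (fun n => {ω | ∃ k : ℕ, k ≤ 2^n ∧ r ≤ B ((k:ℝ) * t / (2^n : ℕ)) ω}) := by
  refine monotone_nat_of_le_succ fun n => ?_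
  rintro ω ⟨k, hk, hrk⟩
  refine ⟨2 * k, by omega, ?_⟩
  have : ((2 * k : ℕ) : ℝ) * t / ((2^(n+1) : ℕ) : ℝ) = (k : ℝ) * t / ((2^n : ℕ) : ℝ) := by
    push_cast
    rw [pow_succ]
    ring
  rw [this]
  exact hrk

lemma lt_sup_subset_iUnion_G (hcont : ∀ ω, Continuous fun u => B u ω) (ht : 0 < t) (r' : ℝ) :
    {ω | r' < ⨆ s : Icc (0:ℝ) t, B (s:ℝ) ω}
      ⊆ ⋃ n, {ω | ∃ k : ℕ, k ≤ 2^n ∧ r' ≤ B ((k:ℝ) * t / (2^n : ℕ)) ω} := by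
  intro ω hω
  simp only [Set.mem_setOf_eq] at hω
  haveI : Nonempty (Icc (0:ℝ) t) := ⟨⟨0, le_refl 0, ht.le⟩⟩
  obtain ⟨⟨s, hs0, hst⟩, hsgt⟩ := exists_lt_of_lt_ciSup hω
  set f : ℝ → ℝ := fun u => B u ω with hf
  have hcf : Continuous f := hcont ω
  have hεpos : 0 < f s - r' := by simpa [hf] using sub_pos.2 hsgt
  obtain ⟨δ, hδpos, hδ⟩ := Metric.continuousAt_iff.1 (hcf.continuousAt (x := s)) _ hεpos
  obtain ⟨n, hn⟩ := exists_pow_lt_of_lt_one (div_pos hδpos ht) (by norm_num : (1:ℝ)/2 < 1)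
  have h2n : (0:ℝ) < (2:ℝ)^n := by positivity
  have hmesh : t / 2^n < δ := by
    have e : t / 2^n = t * (1/2:ℝ)^n := by
      rw [div_eq_mul_inv, one_div, inv_pow]
    rw [e]
    calc t * (1/2:ℝ)^n < t * (δ/t) := by
          exact mul_lt_mul_of_pos_left hn ht
      _ = δ := by field_simp
  set k : ℕ := ⌊s * 2^n / t⌋₊ with hkdef
  have hsnonneg : 0 ≤ s * 2^n / t := by positivity
  have hfloor_le : (k : ℝ) ≤ s * 2^n / t := Nat.floor_le hsnonneg
  have hlt_floor : s * 2^n / t < (k : ℝ) + 1 := Nat.lt_floor_add_one _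
  have hk_le : k ≤ 2^n := by
    have h1 : s * 2^n / t ≤ 2^n := by
      rw [div_le_iff₀ ht]
      nlinarith
    have h2 : (k:ℝ) ≤ ((2:ℝ))^n := le_trans hfloor_le h1
    have h3 : ((2:ℝ))^n = ((2^n : ℕ) : ℝ) := by push_cast; ring
    rw [h3] at h2
    exact Nat.cast_le.1 h2
  set pt : ℝ := (k : ℝ) * t / 2^n with hpt
  have hpt_le : pt ≤ s := by
    rw [hpt, div_le_iff₀ h2n]
    calc (k:ℝ) * t ≤ (s * 2^n / t) * t := by
          exact mul_le_mul_of_nonneg_right hfloor_le (le_of_lt ht)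
      _ = s * 2^n := by field_simp
  have hs_lt : s < pt + t / 2^n := by
    rw [hpt]
    have : s * 2^n < ((k:ℝ) + 1) * t / 2^n * 2^n / t * t := by
      field_simp
      calc s * 2^n = (s * 2^n / t) * t := by field_simp
        _ < ((k:ℝ)+1) * t := by
            exact mul_lt_mul_of_pos_right hlt_floor ht
    have h4 : s < ((k:ℝ)+1) * t / 2^n := by
      rw [lt_div_iff₀ h2n]
      calc s * 2^n = (s * 2^n / t) * t := by field_simp
        _ < ((k:ℝ)+1) * t := mul_lt_mul_of_pos_right hlt_floor ht
    calc s < ((k:ℝ)+1) * t / 2^n := h4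
      _ = (k:ℝ) * t / 2^n + t / 2^n := by ring
  have hdist : dist pt s < δ := by
    rw [Real.dist_eq, abs_sub_lt_iff]
    constructor
    · linarith
    · linarith [hmesh]
  have hval := hδ hdist
  rw [Real.dist_eq, abs_sub_lt_iff] at hval
  have hBpt : r' < B pt ω := by
    simp only [hf] at hval
    linarith [hval.2]
  refine Set.mem_iUnion.2 ⟨n, k, hk_le, ?_⟩
  have hcast : ((2^n : ℕ) : ℝ) = (2:ℝ)^n := by push_cast; ring
  rw [hcast]
  exact le_of_lt hBpt


variable (μ : Measure Ω) [IsProbabilityMeasure μ]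

lemma G_eq_gridS (ht : 0 < t) (n : ℕ) (r : ℝ) :
    {ω | ∃ k : ℕ, k ≤ 2^n ∧ r ≤ B ((k:ℝ) * t / (2^n : ℕ)) ω}
      = {ω | ∃ k : ℕ, k ≤ 2^n ∧ r ≤ gridS B t (2^n) k ω} := by
  ext ω
  simp only [Set.mem_setOf_eq]
  constructor
  · rintro ⟨k, hk, h⟩
    refine ⟨k, hk, ?_⟩
    rw [gridS_eq B t (2^n) k hk]
    exact h
  · rintro ⟨k, hk, h⟩
    rw [gridS_eq B t (2^n) k hk] at h
    exact ⟨k, hk, h⟩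

lemma grid_upper (hB : IsStandardBM μ B) (ht : 0 < t) (r : ℝ) (hr : 0 < r) (n : ℕ) :
    μ {ω | ∃ k : ℕ, k ≤ 2^n ∧ r ≤ B ((k:ℝ) * t / (2^n : ℕ)) ω}
      ≤ μ {ω | r < B t ω} + μ {ω | r ≤ B t ω} := by
  have hm : 1 ≤ 2^n := Nat.one_le_two_pow
  rw [G_eq_gridS B t ht n r]
  have h := discrete_upper μ (gridS B t (2^n)) (2^n) r
    (gridS_meas μ B t (2^n) hB) (gridS_zero μ B t (2^n) hB) hr
    (fun k hk => gridS_indep μ B t (2^n) hB ht hm k hk)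
    (fun k hk => gridS_sym μ B t (2^n) hB ht hm k (le_of_lt hk))
  rw [gridS_last B t (2^n) hm ht] at h
  exact h

lemma grid_lower (hB : IsStandardBM μ B) (ht : 0 < t) (r : ℝ) (hr : 0 < r) (n : ℕ)
    (ε : ℝ) (hε : 0 < ε) :
    μ {ω | r + 2 * ε < B t ω} + μ {ω | r ≤ B t ω}
      ≤ μ {ω | ∃ k : ℕ, k ≤ 2^n ∧ r ≤ B ((k:ℝ) * t / (2^n : ℕ)) ω}
        + μ {ω | ∃ k : ℕ, k < 2^n ∧ ε < gridS B t (2^n) (k+1) ω - gridS B t (2^n) k ω} := by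
  have hm : 1 ≤ 2^n := Nat.one_le_two_pow
  rw [G_eq_gridS B t ht n r]
  have h := discrete_lower μ (gridS B t (2^n)) (2^n) r
    (gridS_meas μ B t (2^n) hB) (gridS_zero μ B t (2^n) hB) hr ε hε
    (fun k hk => gridS_indep μ B t (2^n) hB ht hm k hk)
    (fun k hk => gridS_sym μ B t (2^n) hB ht hm k (le_of_lt hk))
  rw [gridS_last B t (2^n) hm ht] at h
  exact h

lemma bt_map (hB : IsStandardBM μ B) (ht : 0 < t) :
    Measure.map (B t) μ = gaussianReal 0 t.toNNReal := by
  have h := hB.2.2.2.1 0 t (le_refl 0) ht.le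
  have e : (fun ω => B t ω - B 0 ω) = B t := by
    funext ω
    rw [hB.1 ω, sub_zero]
  rw [e] at h
  rw [h, sub_zero]

lemma bt_atom (hB : IsStandardBM μ B) (ht : 0 < t) (r : ℝ) : μ {ω | B t ω = r} = 0 := by
  have hmap := bt_map B t μ hB ht
  have hmeas : Measurable (B t) := hB.2.2.1 t
  have : {ω | B t ω = r} = B t ⁻¹' {r} := by ext ω; simp [Set.mem_preimage]
  rw [this, ← Measure.map_apply hmeas (measurableSet_singleton r), hmap]
  have ht' : t.toNNReal ≠ 0 := by
    simp only [ne_eq, Real.toNNReal_eq_zero, not_le]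
    exact ht
  exact gaussianReal_absolutelyContinuous 0 ht' (measure_singleton r)

lemma bt_lt_eq_le (hB : IsStandardBM μ B) (ht : 0 < t) (r : ℝ) :
    μ {ω | r < B t ω} = μ {ω | r ≤ B t ω} := by
  have hmeas : Measurable (B t) := hB.2.2.1 t
  have hsplit : {ω | r ≤ B t ω} = {ω | r < B t ω} ∪ {ω | B t ω = r} := by
    ext ω
    simp only [Set.mem_setOf_eq, Set.mem_union]
    constructor
    · intro h
      rcases lt_or_eq_of_le h with h' | h'
      · exact Or.inl h'
      · exact Or.inr h'.symm
    · rintro (h | h)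
      · exact le_of_lt h
      · exact le_of_eq h.symm
  rw [hsplit]
  refine le_antisymm (measure_mono Set.subset_union_left) ?_
  calc μ ({ω | r < B t ω} ∪ {ω | B t ω = r})
      ≤ μ {ω | r < B t ω} + μ {ω | B t ω = r} := measure_union_le _ _
    _ = μ {ω | r < B t ω} := by rw [bt_atom B t μ hB ht r, add_zero]

lemma sup_upper (hB : IsStandardBM μ B) (ht : 0 < t) (r : ℝ) (hr : 0 < r) :
    μ {ω | r ≤ ⨆ s : Icc (0:ℝ) t, B (s:ℝ) ω} ≤ 2 * μ {ω | r ≤ B t ω} := by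
  have hcont := hB.2.1
  have hmeasB := hB.2.2.1
  -- approximating thresholds
  set rj : ℕ → ℝ := fun j => r - r / (j + 2) with hrj
  have hrj_pos : ∀ j, 0 < rj j := by
    intro j
    simp only [hrj]
    have : r / ((j:ℝ)+2) < r := by
      apply div_lt_self hr
      linarith [Nat.cast_nonneg (α := ℝ) j]
    linarith
  have hrj_lt : ∀ j, rj j < r := by
    intro j
    simp only [hrj]
    have : 0 < r / ((j:ℝ) + 2) := by positivity
    linarith
  -- for each j, bound via grid upper bound
  have hbound : ∀ j, μ {ω | r ≤ ⨆ s : Icc (0:ℝ) t, B (s:ℝ) ω} ≤ 2 * μ {ω | rj j ≤ B t ω} := by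
    intro j
    have hsub : {ω | r ≤ ⨆ s : Icc (0:ℝ) t, B (s:ℝ) ω}
        ⊆ ⋃ n, {ω | ∃ k : ℕ, k ≤ 2^n ∧ rj j ≤ B ((k:ℝ) * t / (2^n : ℕ)) ω} := by
      refine Set.Subset.trans ?_ (lt_sup_subset_iUnion_G B t hcont ht (rj j))
      intro ω hω
      exact lt_of_lt_of_le (hrj_lt j) hω
    calc μ {ω | r ≤ ⨆ s : Icc (0:ℝ) t, B (s:ℝ) ω}
        ≤ μ (⋃ n, {ω | ∃ k : ℕ, k ≤ 2^n ∧ rj j ≤ B ((k:ℝ) * t / (2^n : ℕ)) ω}) :=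
          measure_mono hsub
      _ = ⨆ n, μ {ω | ∃ k : ℕ, k ≤ 2^n ∧ rj j ≤ B ((k:ℝ) * t / (2^n : ℕ)) ω} :=
          (G_mono B t (rj j)).measure_iUnion
      _ ≤ 2 * μ {ω | rj j ≤ B t ω} := by
          refine iSup_le fun n => ?_
          calc μ {ω | ∃ k : ℕ, k ≤ 2^n ∧ rj j ≤ B ((k:ℝ) * t / (2^n : ℕ)) ω}
              ≤ μ {ω | rj j < B t ω} + μ {ω | rj j ≤ B t ω} :=
                grid_upper B t μ hB ht (rj j) (hrj_pos j) n
            _ ≤ μ {ω | rj j ≤ B t ω} + μ {ω | rj j ≤ B t ω} := by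
                have hmono : μ {ω | rj j < B t ω} ≤ μ {ω | rj j ≤ B t ω} := by
                  apply measure_mono
                  intro ω hω
                  exact le_of_lt (show rj j < B t ω from hω)
                exact add_le_add hmono le_rfl
            _ = 2 * μ {ω | rj j ≤ B t ω} := (two_mul _).symm
  -- limit over j
  have hAnti : Antitone (fun j => {ω | rj j ≤ B t ω}) := by
    intro i j hij
    have : rj i ≤ rj j := by
      simp only [hrj]
      have h1 : (i:ℝ) + 2 ≤ (j:ℝ) + 2 := by
        have : (i:ℝ) ≤ (j:ℝ) := Nat.cast_le.2 hij
        linarith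
      have : r / ((j:ℝ)+2) ≤ r / ((i:ℝ)+2) :=
        div_le_div_of_nonneg_left hr.le (by positivity) h1
      linarith
    exact fun ω hω => le_trans this hω
  have hInter : (⋂ j, {ω | rj j ≤ B t ω}) = {ω | r ≤ B t ω} := by
    ext ω
    simp only [Set.mem_iInter, Set.mem_setOf_eq]
    constructor
    · intro h
      have htend : Filter.Tendsto rj Filter.atTop (nhds r) := by
        have : Filter.Tendsto (fun j : ℕ => r / ((j:ℝ) + 2)) Filter.atTop (nhds 0) := by
          apply Filter.Tendsto.div_atTop (tendsto_const_nhds)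
          exact Filter.tendsto_atTop_add_const_right _ 2 tendsto_natCast_atTop_atTop
        have := tendsto_const_nhds (x := r) (f := Filter.atTop (α := ℕ)).sub this
        simpa using this
      exact le_of_tendsto htend (Filter.Eventually.of_forall h)
    · intro h j
      exact le_trans (hrj_lt j).le h
  have htendμ : Filter.Tendsto (fun j => μ {ω | rj j ≤ B t ω}) Filter.atTop
      (nhds (μ {ω | r ≤ B t ω})) := by
    rw [← hInter]
    exact tendsto_measure_iInter_atTop
      (fun j => (measurableSet_le measurable_const (hmeasB t)).nullMeasurableSet)
      hAnti ⟨0, measure_ne_top μ _⟩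
  have htendμ2 : Filter.Tendsto (fun j => 2 * μ {ω | rj j ≤ B t ω}) Filter.atTop
      (nhds (2 * μ {ω | r ≤ B t ω})) := by
    exact ENNReal.Tendsto.const_mul htendμ (Or.inr (by norm_num))
  exact ge_of_tendsto htendμ2 (Filter.Eventually.of_forall hbound)

lemma bad_tendsto (hB : IsStandardBM μ B) (ht : 0 < t) (ε : ℝ) (hε : 0 < ε) :
    Filter.Tendsto
      (fun n => μ {ω | ∃ k : ℕ, k < 2^n ∧ ε < gridS B t (2^n) (k+1) ω - gridS B t (2^n) k ω})
      Filter.atTop (nhds 0) := by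
  have hcont := hB.2.1
  have hmeasB := hB.2.2.1
  set Bad : ℕ → Set Ω :=
    fun n => {ω | ∃ k : ℕ, k < 2^n ∧ ε < gridS B t (2^n) (k+1) ω - gridS B t (2^n) k ω}
    with hBadDef
  have hBadMeas : ∀ n, MeasurableSet (Bad n) := by
    intro n
    have : Bad n = ⋃ k : ℕ, ⋃ (_ : k < 2^n),
        {ω | ε < gridS B t (2^n) (k+1) ω - gridS B t (2^n) k ω} := by
      ext ω; simp [hBadDef]
    rw [this]
    exact MeasurableSet.iUnion fun k => MeasurableSet.iUnion fun _ =>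
      measurableSet_lt measurable_const
        ((gridS_meas μ B t (2^n) hB (k+1)).sub (gridS_meas μ B t (2^n) hB k))
  -- pointwise: eventually not in Bad n
  have hptwise : ∀ ω, ∀ᶠ n in Filter.atTop, ω ∉ Bad n := by
    intro ω
    have huc : UniformContinuousOn (fun u => B u ω) (Icc 0 t) :=
      isCompact_Icc.uniformContinuousOn_of_continuous ((hcont ω).continuousOn)
    obtain ⟨δ, hδpos, hδ⟩ := Metric.uniformContinuousOn_iff.1 huc ε hε
    obtain ⟨n₀, hn₀⟩ := exists_pow_lt_of_lt_one (div_pos hδpos ht) (by norm_num : (1:ℝ)/2 < 1)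
    refine Filter.eventually_atTop.2 ⟨n₀, fun n hn => ?_⟩
    rintro ⟨k, hk, hkval⟩
    have hm : 1 ≤ 2^n := Nat.one_le_two_pow
    have h2n : (0:ℝ) < (2:ℝ)^n := by positivity
    have hcast : ((2^n : ℕ) : ℝ) = (2:ℝ)^n := by push_cast; ring
    have hp1 : (k : ℝ) * t / (2^n : ℕ) ∈ Icc (0:ℝ) t :=
      grid_mem_Icc t ht (2^n) hm k (le_of_lt hk)
    have hp2 : ((k+1 : ℕ) : ℝ) * t / (2^n : ℕ) ∈ Icc (0:ℝ) t :=
      grid_mem_Icc t ht (2^n) hm (k+1) hk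
    have hmesh : t / 2^n < δ := by
      have e : t / 2^n = t * (1/2:ℝ)^n := by
        rw [div_eq_mul_inv, one_div, inv_pow]
      have hmono : (1/2:ℝ)^n ≤ (1/2:ℝ)^n₀ :=
        pow_le_pow_of_le_one (by norm_num) (by norm_num) hn
      rw [e]
      calc t * (1/2:ℝ)^n ≤ t * (1/2:ℝ)^n₀ := by
            exact mul_le_mul_of_nonneg_left hmono ht.le
        _ < t * (δ/t) := mul_lt_mul_of_pos_left hn₀ ht
        _ = δ := by field_simp
    have hdist : dist (((k+1 : ℕ) : ℝ) * t / (2^n : ℕ)) ((k : ℝ) * t / (2^n : ℕ)) < δ := by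
      rw [Real.dist_eq]
      have e : ((k+1 : ℕ) : ℝ) * t / (2^n : ℕ) - (k : ℝ) * t / (2^n : ℕ) = t / 2^n := by
        rw [hcast]
        push_cast
        ring
      rw [e]
      rw [abs_of_pos (by positivity)]
      exact hmesh
    have := hδ _ hp2 _ hp1 hdist
    rw [Real.dist_eq] at this
    rw [gridS_eq B t (2^n) (k+1) hk, gridS_eq B t (2^n) k (le_of_lt hk)] at hkval
    have habs := le_of_lt (abs_lt.1 this).2
    simp only at hkval habs
    linarith
  -- dominated convergence for indicators
  have hind_eq : ∀ n, μ (Bad n) = ∫⁻ ω, (Bad n).indicator (fun _ => (1:ℝ≥0∞)) ω ∂μ := by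
    intro n
    exact (lintegral_indicator_one (hBadMeas n)).symm
  have htend : Filter.Tendsto
      (fun n => ∫⁻ ω, (Bad n).indicator (fun _ => (1:ℝ≥0∞)) ω ∂μ)
      Filter.atTop (nhds (∫⁻ _ω, (0:ℝ≥0∞) ∂μ)) := by
    refine tendsto_lintegral_of_dominated_convergence (fun _ => (1:ℝ≥0∞)) ?_ ?_ ?_ ?_
    · exact fun n => measurable_const.indicator (hBadMeas n)
    · intro n
      refine Filter.Eventually.of_forall fun ω => ?_
      by_cases h : ω ∈ Bad n <;> simp [h]
    · simp [lintegral_one]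
    · refine Filter.Eventually.of_forall fun ω => ?_
      have h := hptwise ω
      refine Filter.Tendsto.congr' ?_ tendsto_const_nhds
      filter_upwards [h] with n hn
      simp [hn]
  rw [show (∫⁻ _ω, (0:ℝ≥0∞) ∂μ) = 0 by simp] at htend
  simpa only [← hind_eq] using htend

lemma sup_lower (hB : IsStandardBM μ B) (ht : 0 < t) (r : ℝ) (hr : 0 < r) :
    2 * μ {ω | r ≤ B t ω} ≤ μ {ω | r ≤ ⨆ s : Icc (0:ℝ) t, B (s:ℝ) ω} := by
  have hcont := hB.2.1
  have hmeasB := hB.2.2.1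
  -- step C : for each ε > 0
  have hstepC : ∀ ε : ℝ, 0 < ε →
      μ {ω | r + 2 * ε < B t ω} + μ {ω | r ≤ B t ω}
        ≤ μ {ω | r ≤ ⨆ s : Icc (0:ℝ) t, B (s:ℝ) ω} := by
    intro ε hε
    have hbound : ∀ n : ℕ,
        μ {ω | r + 2 * ε < B t ω} + μ {ω | r ≤ B t ω}
          ≤ μ {ω | r ≤ ⨆ s : Icc (0:ℝ) t, B (s:ℝ) ω}
            + μ {ω | ∃ k : ℕ, k < 2^n ∧ ε < gridS B t (2^n) (k+1) ω - gridS B t (2^n) k ω} := by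
      intro n
      calc μ {ω | r + 2 * ε < B t ω} + μ {ω | r ≤ B t ω}
          ≤ μ {ω | ∃ k : ℕ, k ≤ 2^n ∧ r ≤ B ((k:ℝ) * t / (2^n : ℕ)) ω}
            + μ {ω | ∃ k : ℕ, k < 2^n ∧ ε < gridS B t (2^n) (k+1) ω - gridS B t (2^n) k ω} :=
            grid_lower B t μ hB ht r hr n ε hε
        _ ≤ μ {ω | r ≤ ⨆ s : Icc (0:ℝ) t, B (s:ℝ) ω}
            + μ {ω | ∃ k : ℕ, k < 2^n ∧ ε < gridS B t (2^n) (k+1) ω - gridS B t (2^n) k ω} := by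
            exact add_le_add (measure_mono (G_subset_sup B t hcont ht n r)) le_rfl
    have htendRHS : Filter.Tendsto
        (fun n => μ {ω | r ≤ ⨆ s : Icc (0:ℝ) t, B (s:ℝ) ω}
          + μ {ω | ∃ k : ℕ, k < 2^n ∧ ε < gridS B t (2^n) (k+1) ω - gridS B t (2^n) k ω})
        Filter.atTop (nhds (μ {ω | r ≤ ⨆ s : Icc (0:ℝ) t, B (s:ℝ) ω} + 0)) :=
      Filter.Tendsto.add tendsto_const_nhds (bad_tendsto B t μ hB ht ε hε)
    rw [add_zero] at htendRHS
    exact ge_of_tendsto htendRHS (Filter.Eventually.of_forall hbound)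
  -- step D : ε → 0
  set C : ℕ → Set Ω := fun j => {ω | r + 2 * (1/((j:ℝ)+1)) < B t ω} with hC
  have hCmono : Monotone C := by
    intro i j hij
    have h1 : (1:ℝ)/((j:ℝ)+1) ≤ 1/((i:ℝ)+1) := by
      apply div_le_div_of_nonneg_left (by norm_num) (by positivity)
      have : (i:ℝ) ≤ (j:ℝ) := Nat.cast_le.2 hij
      linarith
    intro ω hω
    have hω' : r + 2 * (1/((i:ℝ)+1)) < B t ω := hω
    show r + 2 * (1/((j:ℝ)+1)) < B t ω
    linarith
  have hCunion : (⋃ j, C j) = {ω | r < B t ω} := by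
    ext ω
    simp only [Set.mem_iUnion, hC, Set.mem_setOf_eq]
    constructor
    · rintro ⟨j, hj⟩
      have : 0 < (1:ℝ)/((j:ℝ)+1) := by positivity
      linarith
    · intro h
      obtain ⟨j, hj⟩ := exists_nat_one_div_lt (show 0 < (B t ω - r)/2 by linarith)
      refine ⟨j, ?_⟩
      have : (1:ℝ)/((j:ℝ)+1) < (B t ω - r)/2 := hj
      linarith
  have hCsup : (⨆ j, μ (C j)) = μ {ω | r < B t ω} := by
    rw [← hCunion]
    exact (hCmono.measure_iUnion).symm
  have hle : μ {ω | r < B t ω} + μ {ω | r ≤ B t ω}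
      ≤ μ {ω | r ≤ ⨆ s : Icc (0:ℝ) t, B (s:ℝ) ω} := by
    rw [← hCsup, ENNReal.iSup_add]
    refine iSup_le fun j => ?_
    exact hstepC (1/((j:ℝ)+1)) (by positivity)
  calc 2 * μ {ω | r ≤ B t ω} = μ {ω | r ≤ B t ω} + μ {ω | r ≤ B t ω} := two_mul _
    _ = μ {ω | r < B t ω} + μ {ω | r ≤ B t ω} := by rw [bt_lt_eq_le B t μ hB ht r]
    _ ≤ μ {ω | r ≤ ⨆ s : Icc (0:ℝ) t, B (s:ℝ) ω} := hle

end limits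

/-- Reflection principle: for standard one-dimensional Brownian motion started at `0`
and `R > 0`, `t > 0`, `P(max_{0≤s≤t} B_s ≥ R) = 2 P(B_t ≥ R)
= (2/√(2πt)) ∫_R^∞ e^{−y²/(2t)} dy`. -/
theorem reflection_principle
    {Ω : Type*} [MeasurableSpace Ω] (μ : Measure Ω) [IsProbabilityMeasure μ]
    (B : ℝ → Ω → ℝ) (hB : IsStandardBM μ B) (R t : ℝ) (hR : 0 < R) (ht : 0 < t) :
    μ {ω | R ≤ ⨆ s : Icc (0 : ℝ) t, B (s : ℝ) ω} = 2 * μ {ω | R ≤ B t ω} ∧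
    μ {ω | R ≤ ⨆ s : Icc (0 : ℝ) t, B (s : ℝ) ω}
      = ENNReal.ofReal
          ((2 / Real.sqrt (2 * π * t)) * ∫ y in Ioi R, Real.exp (-y ^ 2 / (2 * t))) := by
  have hmeas := hB.2.2.1
  have part1 : μ {ω | R ≤ ⨆ s : Icc (0 : ℝ) t, B (s : ℝ) ω} = 2 * μ {ω | R ≤ B t ω} :=
    le_antisymm (sup_upper B t μ hB ht R hR) (sup_lower B t μ hB ht R hR)
  refine ⟨part1, part1.trans ?_⟩
  have ht' : t.toNNReal ≠ 0 := by
    simp only [ne_eq, Real.toNNReal_eq_zero, not_le]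
    exact ht
  have h1 : μ {ω | R ≤ B t ω} = gaussianReal 0 t.toNNReal (Ici R) := by
    have hset : {ω | R ≤ B t ω} = B t ⁻¹' Ici R := rfl
    rw [hset, ← Measure.map_apply (hmeas t) measurableSet_Ici, bt_map B t μ hB ht]
  have h3 : ∫ x in Ici R, gaussianPDFReal 0 t.toNNReal x
      = (Real.sqrt (2 * π * t))⁻¹ * ∫ y in Ioi R, Real.exp (-y ^ 2 / (2 * t)) := by
    have hpdf : ∀ x : ℝ, gaussianPDFReal 0 t.toNNReal x
        = (Real.sqrt (2 * π * t))⁻¹ * Real.exp (-x ^ 2 / (2 * t)) := by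
      intro x
      simp only [gaussianPDFReal, Real.coe_toNNReal t ht.le, sub_zero]
    rw [setIntegral_congr_fun measurableSet_Ici (fun x _ => hpdf x)]
    rw [integral_const_mul]
    rw [integral_Ici_eq_integral_Ioi]
  rw [h1, gaussianReal_apply_eq_integral 0 ht' (Ici R), h3]
  rw [show (2:ℝ≥0∞) = ENNReal.ofReal (2:ℝ) by simp]
  rw [← ENNReal.ofReal_mul (by norm_num : (0:ℝ) ≤ 2)]
  congr 1
  rw [div_eq_mul_inv]
  ring
end
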